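/- arXiv:1708.01284 — 12 statements merged into one kernel-verified Lean document; each statement's English description precedes it below -/
import Mathlib

section
/- Let t be a positive integer and let G be a graph on n vertices, with each edge coloured red or blue, such that the minimum degree of G is at least (2n−2t−1)/(t+1). Then the vertex set of G can be covered by at most t monochromatic components. -/
open SimpleGraph

/-- The spanning subgraph of `G` consisting of the edges of colour `i`,
    for an edge-colouring `c` of `G` with `r` colours. -/
def colSub {V : Type} (G : SimpleGraph V) {r : ℕ} (c : Sym2 V → Fin r) (i : Fin r) :
    SimpleGraph V where
  Adj u v := G.Adj u v ∧ c s(u, v) = i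
  symm := ⟨fun u v h => ⟨h.1.symm, by rw [Sym2.eq_swap]; exact h.2⟩⟩
  loopless := ⟨fun v h => G.loopless.irrefl v h.1⟩


/-- `S` is a monochromatic component: the vertex set of a connected component
    of the subgraph of edges of some colour `i`. -/
def IsMonoComp {V : Type} (G : SimpleGraph V) {r : ℕ} (c : Sym2 V → Fin r) (S : Set V) : Prop :=
  ∃ (i : Fin r) (K : (colSub G c i).ConnectedComponent), S = K.supp

open Finset in
lemma colSub_comp_eq {V : Type} (G : SimpleGraph V) {r : ℕ} (c : Sym2 V → Fin r)
    {i : Fin r} {x y : V} (h : (colSub G c i).Adj x y) :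
    (colSub G c i).connectedComponentMk x = (colSub G c i).connectedComponentMk y :=
  ConnectedComponent.sound h.reachable

lemma fin_two_cases (i : Fin 2) : i = 0 ∨ i = 1 := by fin_cases i <;> simp

open Finset in
lemma conflict_card_le {V : Type} [Fintype V]
    (G : SimpleGraph V) [DecidableRel G.Adj] (c : Sym2 V → Fin 2)
    (t n : ℕ) (hn : Fintype.card V = n)
    (hdeg : ∀ v : V, (2 * (n : ℝ) - 2 * t - 1) / (t + 1) ≤ G.degree v)
    (s : Finset V)
    (hconf : ∀ u ∈ s, ∀ v ∈ s, u ≠ v →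
      (colSub G c 0).connectedComponentMk u ≠ (colSub G c 0).connectedComponentMk v ∧
      (colSub G c 1).connectedComponentMk u ≠ (colSub G c 1).connectedComponentMk v) :
    s.card ≤ t := by
  classical
  by_contra hst
  push_neg at hst
  -- two vertices of s with same-coloured edges to a common vertex are equal
  have hkey : ∀ w : V, ∀ u ∈ s, ∀ v ∈ s, G.Adj u w → G.Adj v w →
      c s(u, w) = c s(v, w) → u = v := by
    intro w u hu v hv hadj1 hadj2 hcol
    by_contra huv
    have h1 : (colSub G c (c s(u, w))).Adj u w := ⟨hadj1, rfl⟩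
    have h2 : (colSub G c (c s(u, w))).Adj v w := ⟨hadj2, hcol.symm⟩
    have hcc : (colSub G c (c s(u, w))).connectedComponentMk u =
        (colSub G c (c s(u, w))).connectedComponentMk v :=
      (colSub_comp_eq G c h1).trans (colSub_comp_eq G c h2).symm
    rcases fin_two_cases (c s(u, w)) with h | h
    · exact (hconf u hu v hv huv).1 (h ▸ hcc)
    · exact (hconf u hu v hv huv).2 (h ▸ hcc)
  -- no edges inside s
  have hindep : ∀ u ∈ s, ∀ v ∈ s, ¬ G.Adj u v := by
    intro u hu v hv hadj
    have huv : u ≠ v := G.ne_of_adj hadj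
    have h1 : (colSub G c (c s(u, v))).Adj u v := ⟨hadj, rfl⟩
    have hcc := colSub_comp_eq G c h1
    rcases fin_two_cases (c s(u, v)) with h | h
    · exact (hconf u hu v hv huv).1 (h ▸ hcc)
    · exact (hconf u hu v hv huv).2 (h ▸ hcc)
  -- each vertex has at most two neighbours in s
  have hcount : ∀ w : V, (s.filter (fun u => G.Adj u w)).card ≤ 2 := by
    intro w
    have hle := Finset.card_le_card_of_injOn (f := fun u => c s(u, w))
      (s := s.filter (fun u => G.Adj u w)) (t := Finset.univ)
      (fun a _ => mem_univ _) ?_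
    · simpa using hle
    · intro u hu v hv heq
      rw [Finset.coe_filter, Set.mem_setOf_eq] at hu hv
      exact hkey w u hu.1 v hv.1 hu.2 hv.2 heq
  -- degree sum identity
  have hdegsum : ∑ u ∈ s, G.degree u
      = ∑ w : V, (s.filter (fun u => G.Adj u w)).card := by
    simp_rw [degree, neighborFinset_eq_filter, card_filter]
    exact Finset.sum_comm
  -- bound the sum
  have hzero : ∑ w ∈ s, (s.filter (fun u => G.Adj u w)).card = 0 := by
    refine Finset.sum_eq_zero fun w hw => ?_
    rw [card_eq_zero, filter_eq_empty_iff]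
    exact fun u hu => hindep u hu w hw
  have hbound : ∑ w ∈ Finset.univ \ s, (s.filter (fun u => G.Adj u w)).card
      ≤ (Finset.univ \ s).card * 2 := by
    have := Finset.sum_le_card_nsmul (Finset.univ \ s)
      (fun w => (s.filter (fun u => G.Adj u w)).card) 2 (fun w _ => hcount w)
    simpa using this
  have hmn : s.card ≤ n := hn ▸ Finset.card_le_univ s
  have hsd : (Finset.univ \ s).card = n - s.card := by
    rw [Finset.card_sdiff_of_subset (Finset.subset_univ s), Finset.card_univ, hn]
  have htotal : ∑ u ∈ s, G.degree u ≤ 2 * (n - s.card) := by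
    rw [hdegsum, ← Finset.sum_sdiff (Finset.subset_univ s), hzero, add_zero]
    calc ∑ w ∈ Finset.univ \ s, (s.filter (fun u => G.Adj u w)).card
        ≤ (Finset.univ \ s).card * 2 := hbound
      _ = 2 * (n - s.card) := by rw [hsd, Nat.mul_comm]
  -- lower bound via min degree
  have hlow : (s.card : ℝ) * ((2 * (n : ℝ) - 2 * t - 1) / (t + 1))
      ≤ ∑ u ∈ s, (G.degree u : ℝ) := by
    have := Finset.card_nsmul_le_sum s (fun u => (G.degree u : ℝ))
      ((2 * (n : ℝ) - 2 * t - 1) / (t + 1)) (fun u _ => hdeg u)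
    simpa [nsmul_eq_mul] using this
  have hcast : ∑ u ∈ s, (G.degree u : ℝ) ≤ 2 * ((n : ℝ) - s.card) := by
    have h1 : ((∑ u ∈ s, G.degree u : ℕ) : ℝ) ≤ ((2 * (n - s.card) : ℕ) : ℝ) := by
      exact_mod_cast htotal
    push_cast [Nat.cast_sub hmn] at h1
    exact h1
  have hm1 : (t : ℝ) + 1 ≤ (s.card : ℝ) := by exact_mod_cast hst
  have ht1 : (0 : ℝ) < (t : ℝ) + 1 := by positivity
  have hA : (s.card : ℝ) * (2 * (n : ℝ) - 2 * t - 1) ≤ 2 * ((n : ℝ) - s.card) * (t + 1) := by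
    rw [← div_le_iff₀ ht1, mul_div_assoc]
    exact hlow.trans hcast
  have hB : ((s.card : ℝ) - t - 1) * n ≥ 0 := by
    apply mul_nonneg _ (Nat.cast_nonneg n)
    linarith
  nlinarith [hA, hB, hm1]


open Finset in
lemma koenig_cover {V α β : Type} [Fintype V] [DecidableEq α] [DecidableEq β]
    (f : V → α) (g : V → β) (t : ℕ)
    (h : ∀ s : Finset V,
      (∀ u ∈ s, ∀ v ∈ s, u ≠ v → f u ≠ f v ∧ g u ≠ g v) → s.card ≤ t) :
    ∃ (A : Finset α) (B : Finset β), A.card + B.card ≤ t ∧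
      ∀ v, f v ∈ A ∨ g v ∈ B := by
  classical
  -- covers exist
  have hex : ∃ k : ℕ, ∃ (A : Finset α) (B : Finset β),
      A.card + B.card = k ∧ ∀ v, f v ∈ A ∨ g v ∈ B := by
    exact ⟨_, Finset.univ.image f, ∅, rfl, fun v => Or.inl (mem_image_of_mem f (mem_univ v))⟩
  set τ := Nat.find hex with hτ
  obtain ⟨A, B, hABcard, hABcov⟩ := Nat.find_spec hex
  have hmin : ∀ (A' : Finset α) (B' : Finset β), (∀ v, f v ∈ A' ∨ g v ∈ B') →
      τ ≤ A'.card + B'.card := by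
    intro A' B' hcov
    exact Nat.find_le ⟨A', B', rfl, hcov⟩
  refine ⟨A, B, ?_, hABcov⟩
  -- Hall condition for A side
  set DA : ↥A → Finset β :=
    fun a => ((Finset.univ.filter (fun v => f v = a.1)).image g) \ B with hDA
  have hallA : ∀ s : Finset ↥A, s.card ≤ (s.biUnion DA).card := by
    intro s
    by_contra hlt
    push_neg at hlt
    set S : Finset α := s.image Subtype.val with hS
    have hScard : S.card = s.card := card_image_of_injective _ Subtype.val_injective
    have hSsub : S ⊆ A := by
      intro x hx
      obtain ⟨a, _, rfl⟩ := mem_image.mp hx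
      exact a.2
    have hcov' : ∀ v, f v ∈ A \ S ∨ g v ∈ B ∪ s.biUnion DA := by
      intro v
      rcases hABcov v with hv | hv
      · by_cases hvS : f v ∈ S
        · obtain ⟨a, ha, hav⟩ := mem_image.mp hvS
          by_cases hgB : g v ∈ B
          · exact Or.inr (mem_union_left _ hgB)
          · refine Or.inr (mem_union_right _ (mem_biUnion.mpr ⟨a, ha, ?_⟩))
            rw [hDA]
            refine mem_sdiff.mpr ⟨mem_image.mpr ⟨v, ?_, rfl⟩, hgB⟩
            simp [hav]
        · exact Or.inl (mem_sdiff.mpr ⟨hv, hvS⟩)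
      · exact Or.inr (mem_union_left _ hv)
    have h1 := hmin _ _ hcov'
    have h2 : (A \ S).card = A.card - S.card := card_sdiff_of_subset hSsub
    have h3 : (B ∪ s.biUnion DA).card ≤ B.card + (s.biUnion DA).card := card_union_le _ _
    have h4 : S.card ≤ A.card := card_le_card hSsub
    omega
  obtain ⟨mA, hmAinj, hmAmem⟩ :=
    (Finset.all_card_le_biUnion_card_iff_exists_injective DA).mp hallA
  -- Hall condition for B side
  set DB : ↥B → Finset α :=
    fun b => ((Finset.univ.filter (fun v => g v = b.1)).image f) \ A with hDB
  have hallB : ∀ s : Finset ↥B, s.card ≤ (s.biUnion DB).card := by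
    intro s
    by_contra hlt
    push_neg at hlt
    set S : Finset β := s.image Subtype.val with hS
    have hScard : S.card = s.card := card_image_of_injective _ Subtype.val_injective
    have hSsub : S ⊆ B := by
      intro x hx
      obtain ⟨b, _, rfl⟩ := mem_image.mp hx
      exact b.2
    have hcov' : ∀ v, f v ∈ A ∪ s.biUnion DB ∨ g v ∈ B \ S := by
      intro v
      rcases hABcov v with hv | hv
      · exact Or.inl (mem_union_left _ hv)
      · by_cases hvS : g v ∈ S
        · obtain ⟨b, hb, hbv⟩ := mem_image.mp hvS
          by_cases hfA : f v ∈ A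
          · exact Or.inl (mem_union_left _ hfA)
          · refine Or.inl (mem_union_right _ (mem_biUnion.mpr ⟨b, hb, ?_⟩))
            rw [hDB]
            refine mem_sdiff.mpr ⟨mem_image.mpr ⟨v, ?_, rfl⟩, hfA⟩
            simp [hbv]
        · exact Or.inr (mem_sdiff.mpr ⟨hv, hvS⟩)
    have h1 := hmin _ _ hcov'
    have h2 : (B \ S).card = B.card - S.card := card_sdiff_of_subset hSsub
    have h3 : (A ∪ s.biUnion DB).card ≤ A.card + (s.biUnion DB).card := card_union_le _ _
    have h4 : S.card ≤ B.card := card_le_card hSsub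
    omega
  obtain ⟨mB, hmBinj, hmBmem⟩ :=
    (Finset.all_card_le_biUnion_card_iff_exists_injective DB).mp hallB
  -- extract matching vertices
  have hva : ∀ a : ↥A, ∃ v : V, f v = a.1 ∧ g v = mA a ∧ mA a ∉ B := by
    intro a
    have := hmAmem a
    rw [hDA] at this
    obtain ⟨hmem, hnB⟩ := mem_sdiff.mp this
    obtain ⟨v, hv, hgv⟩ := mem_image.mp hmem
    exact ⟨v, (mem_filter.mp hv).2, hgv, hnB⟩
  have hvb : ∀ b : ↥B, ∃ v : V, g v = b.1 ∧ f v = mB b ∧ mB b ∉ A := by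
    intro b
    have := hmBmem b
    rw [hDB] at this
    obtain ⟨hmem, hnA⟩ := mem_sdiff.mp this
    obtain ⟨v, hv, hfv⟩ := mem_image.mp hmem
    exact ⟨v, (mem_filter.mp hv).2, hfv, hnA⟩
  choose va hva1 hva2 hva3 using hva
  choose vb hvb1 hvb2 hvb3 using hvb
  set s : Finset V := Finset.univ.image va ∪ Finset.univ.image vb with hs
  have hvainj : Function.Injective va := by
    intro a a' h
    apply Subtype.val_injective
    rw [← hva1 a, ← hva1 a', h]
  have hvbinj : Function.Injective vb := by
    intro b b' h
    apply Subtype.val_injective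
    rw [← hvb1 b, ← hvb1 b', h]
  have hdisj : Disjoint (Finset.univ.image va) (Finset.univ.image vb) := by
    rw [Finset.disjoint_left]
    intro x hx hx'
    obtain ⟨a, _, rfl⟩ := mem_image.mp hx
    obtain ⟨b, _, hba⟩ := mem_image.mp hx'
    apply hvb3 b
    rw [← hvb2 b, hba, hva1 a]
    exact a.2
  have hscard : s.card = A.card + B.card := by
    rw [hs, card_union_of_disjoint hdisj, card_image_of_injective _ hvainj,
      card_image_of_injective _ hvbinj, card_univ, card_univ,
      Fintype.card_coe, Fintype.card_coe]
  rw [← hscard]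
  apply h
  intro u hu v hv huv
  rw [hs, mem_union] at hu hv
  rcases hu with hu | hu <;> rcases hv with hv | hv
  · obtain ⟨a, _, rfl⟩ := mem_image.mp hu
    obtain ⟨a', _, rfl⟩ := mem_image.mp hv
    have haa : a ≠ a' := fun hc => huv (by rw [hc])
    constructor
    · rw [hva1, hva1]
      exact fun hc => haa (Subtype.val_injective hc)
    · rw [hva2, hva2]
      exact fun hc => haa (hmAinj hc)
  · obtain ⟨a, _, rfl⟩ := mem_image.mp hu
    obtain ⟨b, _, rfl⟩ := mem_image.mp hv
    constructor
    · rw [hva1, hvb2]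
      exact fun hc => hvb3 b (by rw [← hc]; exact a.2)
    · rw [hva2, hvb1]
      exact fun hc => hva3 a (by rw [hc]; exact b.2)
  · obtain ⟨b, _, rfl⟩ := mem_image.mp hu
    obtain ⟨a, _, rfl⟩ := mem_image.mp hv
    constructor
    · rw [hvb2, hva1]
      exact fun hc => hvb3 b (by rw [hc]; exact a.2)
    · rw [hvb1, hva2]
      exact fun hc => hva3 a (by rw [← hc]; exact b.2)
  · obtain ⟨b, _, rfl⟩ := mem_image.mp hu
    obtain ⟨b', _, rfl⟩ := mem_image.mp hv
    have hbb : b ≠ b' := fun hc => huv (by rw [hc])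
    constructor
    · rw [hvb2, hvb2]
      exact fun hc => hbb (hmBinj hc)
    · rw [hvb1, hvb1]
      exact fun hc => hbb (Subtype.val_injective hc)

/-- A 2-coloured graph on `n` vertices with minimum degree at least `(2n-2t-1)/(t+1)`
    can be covered by at most `t` monochromatic components. -/
theorem cover_by_t_mono_components {V : Type} [Fintype V]
    (G : SimpleGraph V) [DecidableRel G.Adj] (c : Sym2 V → Fin 2)
    (t n : ℕ) (ht : 1 ≤ t) (hn : Fintype.card V = n)
    (hdeg : ∀ v : V, (2 * (n : ℝ) - 2 * t - 1) / (t + 1) ≤ G.degree v) :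
    ∃ S : Finset (Set V), S.card ≤ t ∧ (∀ C ∈ S, IsMonoComp G c C) ∧
      ∀ v : V, ∃ C ∈ S, v ∈ C := by
  classical
  obtain ⟨A, B, hcard, hcov⟩ := koenig_cover
    (fun v => (colSub G c 0).connectedComponentMk v)
    (fun v => (colSub G c 1).connectedComponentMk v) t
    (fun s hs => conflict_card_le G c t n hn hdeg s hs)
  refine ⟨A.image SimpleGraph.ConnectedComponent.supp ∪
    B.image SimpleGraph.ConnectedComponent.supp, ?_, ?_, ?_⟩
  · calc (A.image SimpleGraph.ConnectedComponent.supp ∪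
        B.image SimpleGraph.ConnectedComponent.supp).card
        ≤ (A.image SimpleGraph.ConnectedComponent.supp).card +
          (B.image SimpleGraph.ConnectedComponent.supp).card := Finset.card_union_le _ _
      _ ≤ A.card + B.card := Nat.add_le_add (Finset.card_image_le) (Finset.card_image_le)
      _ ≤ t := hcard
  · intro C hC
    rcases Finset.mem_union.mp hC with hC | hC
    · obtain ⟨K, _, rfl⟩ := Finset.mem_image.mp hC
      exact ⟨0, K, rfl⟩
    · obtain ⟨K, _, rfl⟩ := Finset.mem_image.mp hC
      exact ⟨1, K, rfl⟩
  · intro v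
    rcases hcov v with hv | hv
    · refine ⟨((colSub G c 0).connectedComponentMk v).supp,
        Finset.mem_union_left _ (Finset.mem_image_of_mem _ hv), ?_⟩
      exact (SimpleGraph.ConnectedComponent.mem_supp_iff _ _).mpr rfl
    · refine ⟨((colSub G c 1).connectedComponentMk v).supp,
        Finset.mem_union_right _ (Finset.mem_image_of_mem _ hv), ?_⟩
      exact (SimpleGraph.ConnectedComponent.mem_supp_iff _ _).mpr rfl
end

section
/- Let G be a graph on n vertices, with each edge coloured red or blue, such that the minimum degree of G is at least 3n/4. If R is a red component of G of order greater than n/2 and x is a vertex not in R, then the union of R and the blue component containing x is the whole vertex set of G. -/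
open SimpleGraph

/-- In a 2-coloured graph with minimum degree at least `3n/4`, if `R` is a red
    component of order greater than `n/2` and `x ∉ R`, then `R` together with the
    blue component of `x` covers all the vertices. -/
theorem red_component_plus_blue_component_cover {V : Type} [Fintype V]
    (G : SimpleGraph V) [DecidableRel G.Adj] (c : Sym2 V → Fin 2)
    (n : ℕ) (hn : Fintype.card V = n)
    (hdeg : ∀ v : V, 3 * (n : ℝ) / 4 ≤ G.degree v)
    (R : (colSub G c 0).ConnectedComponent) (hR : (n : ℝ) / 2 < R.supp.ncard)
    (x : V) (hx : x ∉ R.supp) :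
    R.supp ∪ ((colSub G c 1).connectedComponentMk x).supp = Set.univ := by
  classical
  -- any edge from a vertex outside R into R is blue
  have hblue : ∀ z w : V, z ∉ R.supp → w ∈ R.supp → G.Adj z w →
      (colSub G c 1).Adj z w := by
    intro z w hz hw hadj
    by_cases h0 : c s(z, w) = 0
    · exfalso
      have hred : (colSub G c 0).Adj z w := ⟨hadj, h0⟩
      apply hz
      rw [SimpleGraph.ConnectedComponent.mem_supp_iff] at hw ⊢
      rw [← hw]
      exact SimpleGraph.ConnectedComponent.sound hred.reachable
    · refine ⟨hadj, ?_⟩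
      omega
  ext v
  simp only [Set.mem_union, Set.mem_univ, iff_true]
  by_contra hv
  push_neg at hv
  obtain ⟨hvR, hvB⟩ := hv
  set Rs : Finset V := R.supp.toFinset with hRs
  have hRscard : (R.supp.ncard : ℝ) = Rs.card := by
    rw [Set.ncard_eq_toFinset_card']
  -- blue neighbours inside R
  let A : V → Finset V := fun z => (G.neighborFinset z).filter (· ∈ R.supp)
  have hAsub : ∀ z, A z ⊆ Rs := by
    intro z w hw
    simp only [A, Finset.mem_filter] at hw
    simpa [hRs, Set.mem_toFinset] using hw.2
  -- degree bound
  have hAcard : ∀ z : V, (G.degree z : ℝ) ≤ (A z).card + (n - Rs.card) := by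
    intro z
    have hsplit : G.degree z =
        (A z).card + ((G.neighborFinset z).filter (fun w => ¬ w ∈ R.supp)).card := by
      rw [SimpleGraph.degree]
      exact (Finset.card_filter_add_card_filter_not (fun w => w ∈ R.supp)).symm
    have hcompl : ((G.neighborFinset z).filter (fun w => ¬ w ∈ R.supp)).card ≤
        n - Rs.card := by
      have hsub2 : (G.neighborFinset z).filter (fun w => ¬ w ∈ R.supp) ⊆ Rsᶜ := by
        intro w hw
        simp only [Finset.mem_filter] at hw
        simp [hRs, Set.mem_toFinset, hw.2]
      calc _ ≤ Rsᶜ.card := Finset.card_le_card hsub2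
        _ = n - Rs.card := by rw [Finset.card_compl, hn]
    have hle : Rs.card ≤ n := by
      rw [← hn]; exact Finset.card_le_univ _
    have hdr : (G.degree z : ℝ) = (A z).card +
        ((G.neighborFinset z).filter (fun w => ¬ w ∈ R.supp)).card := by
      exact_mod_cast congrArg Nat.cast hsplit
    have : (((G.neighborFinset z).filter (fun w => ¬ w ∈ R.supp)).card : ℝ) ≤
        (n : ℝ) - Rs.card := by
      rw [← Nat.cast_sub hle]
      exact_mod_cast hcompl
    linarith
  -- A x and A v are contained in distinct blue components, hence disjoint
  have hdisj : Disjoint (A x) (A v) := by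
    rw [Finset.disjoint_left]
    intro w hwx hwv
    simp only [A, Finset.mem_filter, SimpleGraph.mem_neighborFinset] at hwx hwv
    have hbx : (colSub G c 1).Adj x w := hblue x w hx hwx.2 hwx.1
    have hbv : (colSub G c 1).Adj v w := hblue v w hvR hwv.2 hwv.1
    apply hvB
    rw [SimpleGraph.ConnectedComponent.mem_supp_iff]
    calc (colSub G c 1).connectedComponentMk v
        = (colSub G c 1).connectedComponentMk w :=
          SimpleGraph.ConnectedComponent.sound hbv.reachable
      _ = (colSub G c 1).connectedComponentMk x :=
          (SimpleGraph.ConnectedComponent.sound hbx.reachable).symm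
  have hsum : (A x).card + (A v).card ≤ Rs.card := by
    rw [← Finset.card_union_of_disjoint hdisj]
    exact Finset.card_le_card (Finset.union_subset (hAsub x) (hAsub v))
  have hdx := hAcard x
  have hdv := hAcard v
  have h1 := hdeg x
  have h2 := hdeg v
  have hsumR : ((A x).card : ℝ) + (A v).card ≤ Rs.card := by exact_mod_cast hsum
  rw [hRscard] at hR
  linarith
end

section
/- Let G be a graph on n vertices, with each edge coloured red, blue or yellow, such that the minimum degree of G is at least 7n/8. If there exist a red component R, a blue component B and a yellow component Y with |R ∩ B ∩ Y| ≥ n/8, then the vertex set of G can be covered by a red component, a blue component and a yellow component (in fact by R, B and Y themselves). -/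
open SimpleGraph

/-- In a 3-coloured graph with minimum degree at least `7n/8`, if a red component `R`,
    a blue component `B` and a yellow component `Y` satisfy `|R ∩ B ∩ Y| ≥ n/8`, then
    `R`, `B` and `Y` together cover all the vertices. -/
theorem three_intersection_cover {V : Type} [Fintype V]
    (G : SimpleGraph V) [DecidableRel G.Adj] (c : Sym2 V → Fin 3)
    (n : ℕ) (hn : Fintype.card V = n)
    (hdeg : ∀ v : V, 7 * (n : ℝ) / 8 ≤ G.degree v)
    (R : (colSub G c 0).ConnectedComponent) (B : (colSub G c 1).ConnectedComponent)
    (Y : (colSub G c 2).ConnectedComponent)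
    (hint : (n : ℝ) / 8 ≤ ((R.supp ∩ B.supp ∩ Y.supp).ncard : ℝ)) :
    R.supp ∪ B.supp ∪ Y.supp = Set.univ := by
  classical
  ext v
  simp only [Set.mem_union, Set.mem_univ, iff_true]
  set S : Set V := R.supp ∩ B.supp ∩ Y.supp with hS
  have key : ∃ u ∈ S, u = v ∨ G.Adj v u := by
    by_contra h
    push_neg at h
    set T : Finset V := ((G.neighborFinset v)ᶜ).erase v with hT
    have hsub : S ⊆ ↑T := by
      intro u hu
      obtain ⟨hne, hna⟩ := h u hu
      rw [Finset.mem_coe, Finset.mem_erase, Finset.mem_compl, mem_neighborFinset]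
      exact ⟨hne, hna⟩
    have hcardT : T.card = n - G.degree v - 1 := by
      have hv : v ∈ (G.neighborFinset v)ᶜ := by simp
      rw [hT, Finset.card_erase_of_mem hv, Finset.card_compl,
        card_neighborFinset_eq_degree, hn]
    have hSle : S.ncard ≤ T.card := by
      have := Set.ncard_le_ncard hsub T.finite_toSet
      simpa using this
    have hd := hdeg v
    have hdn : G.degree v ≤ n := by
      rw [← hn]; exact (G.degree_lt_card_verts v).le
    have h1 : 1 ≤ n - G.degree v := by
      have hvT : v ∈ (G.neighborFinset v)ᶜ := by simp
      have : 0 < ((G.neighborFinset v)ᶜ).card := Finset.card_pos.mpr ⟨v, hvT⟩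
      rw [Finset.card_compl, card_neighborFinset_eq_degree, hn] at this
      omega
    have hTreal : (T.card : ℝ) = (n : ℝ) - G.degree v - 1 := by
      rw [hcardT, Nat.cast_sub h1, Nat.cast_sub hdn]
      push_cast
      ring
    have : (n : ℝ) / 8 ≤ (n : ℝ) - G.degree v - 1 := by
      calc (n : ℝ) / 8 ≤ (S.ncard : ℝ) := hint
        _ ≤ (T.card : ℝ) := by exact_mod_cast hSle
        _ = _ := hTreal
    linarith
  obtain ⟨u, huS, hu⟩ := key
  rcases hu with rfl | hadj
  · left; left; exact huS.1.1
  · have huR : (colSub G c 0).connectedComponentMk u = R :=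
      ConnectedComponent.mem_supp_iff _ _ |>.mp huS.1.1
    have huB : (colSub G c 1).connectedComponentMk u = B :=
      ConnectedComponent.mem_supp_iff _ _ |>.mp huS.1.2
    have huY : (colSub G c 2).connectedComponentMk u = Y :=
      ConnectedComponent.mem_supp_iff _ _ |>.mp huS.2
    have hcase : c s(v, u) = 0 ∨ c s(v, u) = 1 ∨ c s(v, u) = 2 := by
      generalize c s(v, u) = i
      fin_cases i <;> simp
    rcases hcase with h0 | h1 | h2
    · left; left
      rw [ConnectedComponent.mem_supp_iff, ← huR]
      exact ConnectedComponent.sound (Adj.reachable ⟨hadj, h0⟩)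
    · left; right
      rw [ConnectedComponent.mem_supp_iff, ← huB]
      exact ConnectedComponent.sound (Adj.reachable ⟨hadj, h1⟩)
    · right
      rw [ConnectedComponent.mem_supp_iff, ← huY]
      exact ConnectedComponent.sound (Adj.reachable ⟨hadj, h2⟩)
end

section
/- Let G be a graph on n vertices, with each edge coloured red, blue or yellow, such that the minimum degree of G is at least 7n/8. If there exist two monochromatic components of distinct colours whose intersection has size at least n/4, then the vertex set of G can be covered by three monochromatic components of pairwise distinct colours. -/
open SimpleGraph

/-- Permutations of a covering by three sets. -/
lemma perm_cover {α : Type} {a b d : Set α} (h : a ∪ b ∪ d = Set.univ) :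
    b ∪ a ∪ d = Set.univ ∧ a ∪ d ∪ b = Set.univ ∧ d ∪ a ∪ b = Set.univ ∧
    b ∪ d ∪ a = Set.univ ∧ d ∪ b ∪ a = Set.univ := by
  rw [Set.eq_univ_iff_forall] at h
  refine ⟨?_, ?_, ?_, ?_, ?_⟩ <;>
    · rw [Set.eq_univ_iff_forall]
      intro x
      have := h x
      simp only [Set.mem_union] at this ⊢
      tauto

/-- In a 3-coloured graph with minimum degree at least `7n/8`, if two monochromatic
    components of distinct colours intersect in at least `n/4` vertices, then the
    vertices can be covered by three monochromatic components of pairwise distinct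
    colours. -/
theorem two_intersection_cover {V : Type} [Fintype V]
    (G : SimpleGraph V) [DecidableRel G.Adj] (c : Sym2 V → Fin 3)
    (n : ℕ) (hn : Fintype.card V = n)
    (hdeg : ∀ v : V, 7 * (n : ℝ) / 8 ≤ G.degree v)
    (hint : ∃ (i j : Fin 3), i ≠ j ∧
      ∃ (Ci : (colSub G c i).ConnectedComponent) (Cj : (colSub G c j).ConnectedComponent),
        (n : ℝ) / 4 ≤ ((Ci.supp ∩ Cj.supp).ncard : ℝ)) :
    ∃ (R : (colSub G c 0).ConnectedComponent) (B : (colSub G c 1).ConnectedComponent)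
      (Y : (colSub G c 2).ConnectedComponent),
      R.supp ∪ B.supp ∪ Y.supp = Set.univ := by
  classical
  obtain ⟨i, j, hij, Ci, Cj, hS⟩ := hint
  -- Key lemma: for the third colour `t`, there is a `t`-component completing the cover.
  have key : ∀ t : Fin 3, t ≠ i → t ≠ j →
      ∃ Ct : (colSub G c t).ConnectedComponent,
        Ci.supp ∪ Cj.supp ∪ Ct.supp = Set.univ := by
    intro t hti htj
    set S : Set V := Ci.supp ∩ Cj.supp with hSdef
    -- bound on the number of non-neighbours of a vertex
    have hMu : ∀ u : V, ((({u} ∪ G.neighborSet u)ᶜ).ncard : ℝ) ≤ (n : ℝ) / 8 - 1 := by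
      intro u
      have h1 : ({u} ∪ G.neighborSet u).ncard + (({u} ∪ G.neighborSet u)ᶜ).ncard = n := by
        rw [Set.ncard_add_ncard_compl, Nat.card_eq_fintype_card, hn]
      have h2 : ({u} ∪ G.neighborSet u).ncard = G.degree u + 1 := by
        rw [Set.singleton_union, Set.ncard_insert_of_notMem (by simp)]
        rw [Set.ncard_eq_toFinset_card']
        simp [SimpleGraph.degree, SimpleGraph.neighborFinset]
      have hd := hdeg u
      have h1' := congrArg (Nat.cast : ℕ → ℝ) h1
      rw [h2] at h1'
      push_cast at h1'
      linarith
    -- counting: two vertices outside the two components share a neighbour in S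
    have count : ∀ u v : V, u ∉ Ci.supp ∪ Cj.supp → v ∉ Ci.supp ∪ Cj.supp →
        ∃ s ∈ S, G.Adj u s ∧ G.Adj v s := by
      intro u v hu hv
      by_contra hcon
      push_neg at hcon
      have hsub : S ⊆ ({u} ∪ G.neighborSet u)ᶜ ∪ ({v} ∪ G.neighborSet v)ᶜ := by
        intro s hs
        by_cases hau : G.Adj u s
        · right
          simp only [Set.mem_compl_iff, Set.mem_union, Set.mem_singleton_iff,
            SimpleGraph.mem_neighborSet]
          rintro (rfl | hav)
          · exact hv (Set.mem_union_right _ hs.2)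
          · exact hcon s hs hau hav
        · left
          simp only [Set.mem_compl_iff, Set.mem_union, Set.mem_singleton_iff,
            SimpleGraph.mem_neighborSet]
          rintro (rfl | h)
          · exact hu (Set.mem_union_right _ hs.2)
          · exact hau h
      have hle : S.ncard ≤ (({u} ∪ G.neighborSet u)ᶜ).ncard
          + (({v} ∪ G.neighborSet v)ᶜ).ncard := by
        refine le_trans (Set.ncard_le_ncard hsub (Set.toFinite _)) ?_
        exact Set.ncard_union_le _ _
      have hle' : (S.ncard : ℝ) ≤ ((({u} ∪ G.neighborSet u)ᶜ).ncard : ℝ)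
          + ((({v} ∪ G.neighborSet v)ᶜ).ncard : ℝ) := by exact_mod_cast hle
      have h1 := hMu u
      have h2 := hMu v
      linarith
    -- edges from outside into S have colour t
    have colt : ∀ w s : V, w ∉ Ci.supp ∪ Cj.supp → s ∈ S → G.Adj w s →
        (colSub G c t).Adj w s := by
      intro w s hw hs hadj
      refine ⟨hadj, ?_⟩
      have hki : c s(w, s) ≠ i := by
        intro h
        apply hw
        left
        rw [SimpleGraph.ConnectedComponent.mem_supp_iff]
        have hs' : (colSub G c i).connectedComponentMk s = Ci := hs.1
        rw [← hs', SimpleGraph.ConnectedComponent.eq]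
        exact SimpleGraph.Adj.reachable ⟨hadj, h⟩
      have hkj : c s(w, s) ≠ j := by
        intro h
        apply hw
        right
        rw [SimpleGraph.ConnectedComponent.mem_supp_iff]
        have hs' : (colSub G c j).connectedComponentMk s = Cj := hs.2
        rw [← hs', SimpleGraph.ConnectedComponent.eq]
        exact SimpleGraph.Adj.reachable ⟨hadj, h⟩
      have htriv : ∀ a b t' k : Fin 3, a ≠ b → t' ≠ a → t' ≠ b → k ≠ a → k ≠ b → k = t' := by
        decide
      exact htriv i j t _ hij hti htj hki hkj
    by_cases hA : ∀ w : V, w ∈ Ci.supp ∪ Cj.supp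
    · obtain ⟨v0, -⟩ := Ci.exists_rep
      refine ⟨(colSub G c t).connectedComponentMk v0, ?_⟩
      exact Set.eq_univ_of_forall fun w => Set.mem_union_left _ (hA w)
    · push_neg at hA
      obtain ⟨u₀, hu₀⟩ := hA
      refine ⟨(colSub G c t).connectedComponentMk u₀, ?_⟩
      apply Set.eq_univ_of_forall
      intro w
      by_cases hw : w ∈ Ci.supp ∪ Cj.supp
      · exact Set.mem_union_left _ hw
      · right
        obtain ⟨s, hs, hus, hws⟩ := count u₀ w hu₀ hw
        rw [SimpleGraph.ConnectedComponent.mem_supp_iff, SimpleGraph.ConnectedComponent.eq]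
        exact ((colt w s hw hs hws).reachable).trans ((colt u₀ s hu₀ hs hus).reachable.symm)
  fin_cases i <;> fin_cases j <;>
    first
      | exact absurd rfl hij
      | exact (key 2 (by decide) (by decide)).elim fun Ct h => ⟨Ci, Cj, Ct, h⟩
      | exact (key 2 (by decide) (by decide)).elim fun Ct h => ⟨Cj, Ci, Ct, (perm_cover h).1⟩
      | exact (key 1 (by decide) (by decide)).elim fun Ct h => ⟨Ci, Ct, Cj, (perm_cover h).2.1⟩
      | exact (key 1 (by decide) (by decide)).elim fun Ct h => ⟨Cj, Ct, Ci, (perm_cover h).2.2.2.1⟩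
      | exact (key 0 (by decide) (by decide)).elim fun Ct h => ⟨Ct, Ci, Cj, (perm_cover h).2.2.1⟩
      | exact (key 0 (by decide) (by decide)).elim fun Ct h => ⟨Ct, Cj, Ci, (perm_cover h).2.2.2.2⟩
end

section
/- Let G be a graph on n vertices, with each edge coloured red, blue or yellow, such that the minimum degree of G is at least 7n/8. If G has a monochromatic component of order at least n/2, then the vertex set of G can be covered by three monochromatic components of pairwise distinct colours. -/
open SimpleGraph

section Helpers

variable {V : Type} [Fintype V] {G : SimpleGraph V} [DecidableRel G.Adj] {n : ℕ}

/-- Each vertex has at most `n/8` non-neighbours (including itself). -/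
lemma ncard_nonadj (hn : Fintype.card V = n)
    (hdeg : ∀ v : V, 7 * (n : ℝ) / 8 ≤ G.degree v) (d : V) :
    (({u | ¬ G.Adj d u} : Set V).ncard : ℝ) ≤ (n : ℝ) / 8 := by
  have hcompl : ({u | ¬ G.Adj d u} : Set V) = (G.neighborSet d)ᶜ := rfl
  have hdegcard : (G.neighborSet d).ncard = G.degree d := by
    rw [← Nat.card_coe_set_eq, Nat.card_eq_fintype_card, card_neighborSet_eq_degree]
  have hsum := Set.ncard_add_ncard_compl (G.neighborSet d) (Set.toFinite _)
  rw [hdegcard, Nat.card_eq_fintype_card, hn] at hsum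
  have h1 : (G.degree d : ℝ) + (((G.neighborSet d)ᶜ).ncard : ℝ) = (n : ℝ) := by
    exact_mod_cast hsum
  have h2 := hdeg d
  rw [hcompl]
  linarith

/-- If a set has at least `n/8` elements and does not contain `d`, then `d` has a
    neighbour in it. -/
lemma exists_adj_of_ncard (hn : Fintype.card V = n)
    (hdeg : ∀ v : V, 7 * (n : ℝ) / 8 ≤ G.degree v)
    {A : Set V} {d : V} (hd : d ∉ A) (hA : (n : ℝ) / 8 ≤ (A.ncard : ℝ)) :
    ∃ u ∈ A, G.Adj d u := by
  by_contra hcon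
  push_neg at hcon
  have hsub : insert d A ⊆ {u | ¬ G.Adj d u} := by
    intro u hu
    rcases Set.mem_insert_iff.mp hu with rfl | hu
    · exact G.loopless.irrefl u
    · exact hcon u hu
  have h1 : (insert d A).ncard ≤ ({u | ¬ G.Adj d u} : Set V).ncard :=
    Set.ncard_le_ncard hsub (Set.toFinite _)
  rw [Set.ncard_insert_of_notMem hd (Set.toFinite _)] at h1
  have h2 := ncard_nonadj hn hdeg d
  have h3 : ((A.ncard : ℝ) + 1) ≤ (n : ℝ) / 8 := by
    calc ((A.ncard : ℝ) + 1) = ((A.ncard + 1 : ℕ) : ℝ) := by push_cast; ring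
    _ ≤ (({u | ¬ G.Adj d u} : Set V).ncard : ℝ) := by exact_mod_cast h1
    _ ≤ (n : ℝ) / 8 := h2
  linarith

lemma colSub_mk_eq {c : Sym2 V → Fin 3} {m : Fin 3} {x u : V}
    (hadj : G.Adj x u) (hc : c s(x, u) = m) :
    (colSub G c m).connectedComponentMk x = (colSub G c m).connectedComponentMk u :=
  ConnectedComponent.eq.mpr (Adj.reachable (⟨hadj, hc⟩ : G.Adj x u ∧ c s(x, u) = m))

/-- Main covering lemma: colour `i` has a component of order at least `n/2`;
    produce a component of colour `j` and one of colour `k` completing a cover. -/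
lemma cover_aux (G : SimpleGraph V) [DecidableRel G.Adj]
    (c : Sym2 V → Fin 3) (hn : Fintype.card V = n)
    (hdeg : ∀ v : V, 7 * (n : ℝ) / 8 ≤ G.degree v)
    (i j k : Fin 3) (hall : ∀ m : Fin 3, m = i ∨ m = j ∨ m = k)
    (C : (colSub G c i).ConnectedComponent)
    (hC : (n : ℝ) / 2 ≤ (C.supp.ncard : ℝ)) :
    ∃ (B : (colSub G c j).ConnectedComponent) (Y : (colSub G c k).ConnectedComponent),
      C.supp ∪ B.supp ∪ Y.supp = Set.univ := by
  classical
  -- an edge from outside `C` into `C` cannot have colour `i`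
  have hCc : ∀ {d u : V}, u ∈ C.supp → d ∉ C.supp → G.Adj d u → c s(d, u) ≠ i := by
    intro d u hu hd hadj he
    apply hd
    rw [ConnectedComponent.mem_supp_iff] at hu ⊢
    rw [colSub_mk_eq hadj he, hu]
  -- key step: if `A ⊆ C.supp` is large and contained in both `B.supp` and `Y.supp`,
  -- then `C, B, Y` cover everything
  have main : ∀ (B : (colSub G c j).ConnectedComponent)
      (Y : (colSub G c k).ConnectedComponent) (A : Set V),
      A ⊆ C.supp → (n : ℝ) / 8 ≤ (A.ncard : ℝ) → A ⊆ B.supp → A ⊆ Y.supp →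
      C.supp ∪ B.supp ∪ Y.supp = Set.univ := by
    intro B Y A hAC hAcard hAB hAY
    ext x
    simp only [Set.mem_union, Set.mem_univ, iff_true]
    by_cases hx : x ∈ C.supp
    · exact Or.inl (Or.inl hx)
    have hxA : x ∉ A := fun h => hx (hAC h)
    obtain ⟨u, huA, hadj⟩ := exists_adj_of_ncard hn hdeg hxA hAcard
    rcases hall (c s(x, u)) with hcol | hcol | hcol
    · exact absurd hcol (hCc (hAC huA) hx hadj)
    · refine Or.inl (Or.inr ?_)
      rw [ConnectedComponent.mem_supp_iff, colSub_mk_eq hadj hcol,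
        ← ConnectedComponent.mem_supp_iff]
      exact hAB huA
    · refine Or.inr ?_
      rw [ConnectedComponent.mem_supp_iff, colSub_mk_eq hadj hcol,
        ← ConnectedComponent.mem_supp_iff]
      exact hAY huA
  by_cases hD : ∀ x : V, x ∈ C.supp
  · -- `C` covers everything already
    obtain ⟨x0, -⟩ := C.exists_rep
    refine ⟨(colSub G c j).connectedComponentMk x0, (colSub G c k).connectedComponentMk x0, ?_⟩
    ext x
    simp only [Set.mem_union, Set.mem_univ, iff_true]
    exact Or.inl (Or.inl (hD x))
  push_neg at hD
  obtain ⟨v, hv⟩ := hD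
  by_cases hcond : ∀ x : V, x ∉ C.supp →
      (colSub G c j).connectedComponentMk x = (colSub G c j).connectedComponentMk v ∨
      (colSub G c k).connectedComponentMk x = (colSub G c k).connectedComponentMk v
  · -- everything outside `C` lies in `v`'s colour-`j` or colour-`k` component
    refine ⟨(colSub G c j).connectedComponentMk v, (colSub G c k).connectedComponentMk v, ?_⟩
    ext x
    simp only [Set.mem_union, Set.mem_univ, iff_true]
    by_cases hx : x ∈ C.supp
    · exact Or.inl (Or.inl hx)
    rcases hcond x hx with h | h
    · exact Or.inl (Or.inr ((ConnectedComponent.mem_supp_iff _ _).mpr h))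
    · exact Or.inr ((ConnectedComponent.mem_supp_iff _ _).mpr h)
  push_neg at hcond
  obtain ⟨w, hw, hbvw, hyvw⟩ := hcond
  -- the common neighbourhood of `v` and `w` inside `C`
  set W : Set V := C.supp ∩ {u | G.Adj v u} ∩ {u | G.Adj w u} with hWdef
  have hWC : W ⊆ C.supp := fun u hu => hu.1.1
  have hWcard : (n : ℝ) / 4 ≤ (W.ncard : ℝ) := by
    have hsub : C.supp ⊆ W ∪ ({u | ¬ G.Adj v u} ∪ {u | ¬ G.Adj w u}) := by
      intro u hu
      by_cases h1 : G.Adj v u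
      · by_cases h2 : G.Adj w u
        · exact Or.inl ⟨⟨hu, h1⟩, h2⟩
        · exact Or.inr (Or.inr h2)
      · exact Or.inr (Or.inl h1)
    have h1 : C.supp.ncard ≤ (W ∪ ({u | ¬ G.Adj v u} ∪ {u | ¬ G.Adj w u})).ncard :=
      Set.ncard_le_ncard hsub (Set.toFinite _)
    have h2 := Set.ncard_union_le W ({u | ¬ G.Adj v u} ∪ {u | ¬ G.Adj w u})
    have h3 := Set.ncard_union_le ({u | ¬ G.Adj v u} : Set V) {u | ¬ G.Adj w u}
    have h4 := ncard_nonadj hn hdeg v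
    have h5 := ncard_nonadj hn hdeg w
    have h1' : (C.supp.ncard : ℝ) ≤
        ((W ∪ ({u | ¬ G.Adj v u} ∪ {u | ¬ G.Adj w u})).ncard : ℝ) := by exact_mod_cast h1
    have h2' : ((W ∪ ({u | ¬ G.Adj v u} ∪ {u | ¬ G.Adj w u})).ncard : ℝ) ≤
        (W.ncard : ℝ) + (({u | ¬ G.Adj v u} ∪ {u | ¬ G.Adj w u}).ncard : ℝ) := by
      exact_mod_cast h2
    have h3' : ((({u | ¬ G.Adj v u} ∪ {u | ¬ G.Adj w u}) : Set V).ncard : ℝ) ≤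
        (({u | ¬ G.Adj v u} : Set V).ncard : ℝ) + (({u | ¬ G.Adj w u} : Set V).ncard : ℝ) := by
      exact_mod_cast h3
    linarith
  set Bv := (colSub G c j).connectedComponentMk v with hBv
  set W1 : Set V := W ∩ Bv.supp with hW1
  set W2 : Set V := W \ Bv.supp with hW2
  have hsplit : (W1.ncard : ℝ) + (W2.ncard : ℝ) = (W.ncard : ℝ) := by
    have := Set.ncard_inter_add_ncard_diff_eq_ncard W Bv.supp (Set.toFinite _)
    exact_mod_cast this
  -- `W1` is inside `w`'s colour-`k` component
  have hW1Y : W1 ⊆ ((colSub G c k).connectedComponentMk w).supp := by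
    rintro u ⟨⟨⟨huC, hvadj⟩, hwadj⟩, huB⟩
    rcases hall (c s(w, u)) with hcol | hcol | hcol
    · exact absurd hcol (hCc huC hw hwadj)
    · exfalso
      apply hbvw
      rw [ConnectedComponent.mem_supp_iff] at huB
      rw [← huB, ← colSub_mk_eq hwadj hcol]
    · rw [ConnectedComponent.mem_supp_iff, ← colSub_mk_eq hwadj hcol]
  -- `W2` is inside `v`'s colour-`k` component
  have hW2Y : W2 ⊆ ((colSub G c k).connectedComponentMk v).supp := by
    rintro u ⟨⟨⟨huC, hvadj⟩, hwadj⟩, huB⟩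
    rcases hall (c s(v, u)) with hcol | hcol | hcol
    · exact absurd hcol (hCc huC hv hvadj)
    · exact absurd ((ConnectedComponent.mem_supp_iff _ _).mpr (colSub_mk_eq hvadj hcol).symm) huB
    · rw [ConnectedComponent.mem_supp_iff, ← colSub_mk_eq hvadj hcol]
  -- `W2` is inside `w`'s colour-`j` component
  have hW2B : W2 ⊆ ((colSub G c j).connectedComponentMk w).supp := by
    intro u hu
    obtain ⟨⟨⟨huC, hvadj⟩, hwadj⟩, huB⟩ := hu
    rcases hall (c s(w, u)) with hcol | hcol | hcol
    · exact absurd hcol (hCc huC hw hwadj)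
    · rw [ConnectedComponent.mem_supp_iff, ← colSub_mk_eq hwadj hcol]
    · exfalso
      apply hyvw
      have h1 := hW2Y ⟨⟨⟨huC, hvadj⟩, hwadj⟩, huB⟩
      rw [ConnectedComponent.mem_supp_iff] at h1
      rw [← h1, ← colSub_mk_eq hwadj hcol]
  rcases le_or_gt ((n : ℝ) / 8) (W1.ncard : ℝ) with h1 | h1
  · exact ⟨Bv, (colSub G c k).connectedComponentMk w,
      main _ _ W1 (fun u hu => hWC hu.1) h1 (fun u hu => hu.2) hW1Y⟩
  · have h2 : (n : ℝ) / 8 ≤ (W2.ncard : ℝ) := by linarith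
    exact ⟨(colSub G c j).connectedComponentMk w, (colSub G c k).connectedComponentMk v,
      main _ _ W2 (fun u hu => hWC hu.1) h2 hW2B hW2Y⟩

end Helpers

/-- In a 3-coloured graph with minimum degree at least `7n/8`, if there is a
    monochromatic component of order at least `n/2`, then the vertices can be covered
    by three monochromatic components of pairwise distinct colours. -/
theorem one_large_component_cover {V : Type} [Fintype V]
    (G : SimpleGraph V) [DecidableRel G.Adj] (c : Sym2 V → Fin 3)
    (n : ℕ) (hn : Fintype.card V = n)
    (hdeg : ∀ v : V, 7 * (n : ℝ) / 8 ≤ G.degree v)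
    (hbig : ∃ (i : Fin 3) (C : (colSub G c i).ConnectedComponent),
      (n : ℝ) / 2 ≤ (C.supp.ncard : ℝ)) :
    ∃ (R : (colSub G c 0).ConnectedComponent) (B : (colSub G c 1).ConnectedComponent)
      (Y : (colSub G c 2).ConnectedComponent),
      R.supp ∪ B.supp ∪ Y.supp = Set.univ := by
  obtain ⟨i, C, hC⟩ := hbig
  fin_cases i
  · obtain ⟨B, Y, h⟩ := cover_aux G c hn hdeg 0 1 2 (by decide) C hC
    exact ⟨C, B, Y, h⟩
  · obtain ⟨R, Y, h⟩ := cover_aux G c hn hdeg 1 0 2 (by decide) C hC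
    refine ⟨R, C, Y, ?_⟩
    rw [Set.union_comm R.supp C.supp]
    exact h
  · obtain ⟨R, B, h⟩ := cover_aux G c hn hdeg 2 0 1 (by decide) C hC
    refine ⟨R, B, C, ?_⟩
    rw [Set.ext_iff] at h ⊢
    intro x
    have := h x
    simp only [Set.mem_union, Set.mem_univ, iff_true] at this ⊢
    tauto
end

section
/- Let H be a bipartite graph with parts X and Y, both nonempty, and with at least one edge. Then there exists an edge xy of H (with x ∈ X, y ∈ Y) such that d_H(x) + d_H(y) ≥ e(H) · (1/|X| + 1/|Y|), where e(H) is the number of edges of H and d_H denotes the degree in H. -/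
open SimpleGraph Finset

section Aux

variable {V : Type} [Fintype V] [DecidableEq V]
    (H : SimpleGraph V) [DecidableRel H.Adj]

/-- Oriented edges whose first endpoint lies in `A`. -/
def orE (A : Finset V) : Finset (V × V) :=
  (A ×ˢ Finset.univ).filter fun p => H.Adj p.1 p.2

lemma sum_orE {M : Type} [AddCommMonoid M] (A : Finset V) (g : V × V → M) :
    ∑ p ∈ orE H A, g p = ∑ x ∈ A, ∑ y ∈ H.neighborFinset x, g (x, y) := by
  rw [orE, Finset.sum_filter, Finset.sum_product]
  refine Finset.sum_congr rfl fun x _ => ?_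
  rw [SimpleGraph.neighborFinset_eq_filter, Finset.sum_filter]

lemma card_orE (A : Finset V) : (orE H A).card = ∑ x ∈ A, H.degree x := by
  rw [Finset.card_eq_sum_ones, sum_orE]
  refine Finset.sum_congr rfl fun x _ => ?_
  rw [Finset.sum_const, smul_eq_mul, mul_one, SimpleGraph.degree]

lemma sum_orE_deg_fst (A : Finset V) :
    ∑ p ∈ orE H A, H.degree p.1 = ∑ x ∈ A, (H.degree x) ^ 2 := by
  rw [sum_orE]
  refine Finset.sum_congr rfl fun x _ => ?_
  simp only []
  show ∑ _y ∈ H.neighborFinset x, H.degree x = _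
  simp only [Finset.sum_const, smul_eq_mul, SimpleGraph.card_neighborFinset_eq_degree, sq]

end Aux

/-- In a bipartite graph `H` with nonempty parts `X` and `Y` and at least one edge,
    there is an edge `xy` with `d(x) + d(y) ≥ e(H) * (1/|X| + 1/|Y|)`. -/
theorem exists_edge_large_degree_sum {V : Type} [Fintype V] [DecidableEq V]
    (H : SimpleGraph V) [DecidableRel H.Adj]
    (X Y : Finset V) (hdisj : Disjoint X Y) (hunion : X ∪ Y = Finset.univ)
    (hX : X.Nonempty) (hY : Y.Nonempty)
    (hbip : ∀ u v : V, H.Adj u v → (u ∈ X ∧ v ∈ Y) ∨ (u ∈ Y ∧ v ∈ X))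
    (hedge : 0 < H.edgeFinset.card) :
    ∃ x ∈ X, ∃ y ∈ Y, H.Adj x y ∧
      (H.edgeFinset.card : ℝ) * (1 / X.card + 1 / Y.card) ≤
        (H.degree x : ℝ) + (H.degree y : ℝ) := by
  classical
  set e : ℕ := H.edgeFinset.card with he
  -- swap bijection between orE H X and orE H Y
  have hmemX : ∀ p ∈ orE H X, p.1 ∈ X ∧ p.2 ∈ Y ∧ H.Adj p.1 p.2 := by
    intro p hp
    rw [orE, Finset.mem_filter, Finset.mem_product] at hp
    obtain ⟨⟨h1, -⟩, hadj⟩ := hp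
    refine ⟨h1, ?_, hadj⟩
    rcases hbip _ _ hadj with ⟨-, h⟩ | ⟨h, -⟩
    · exact h
    · exact absurd h1 (Finset.disjoint_left.mp hdisj.symm h)
  have hmemY : ∀ p ∈ orE H Y, p.1 ∈ Y ∧ p.2 ∈ X ∧ H.Adj p.1 p.2 := by
    intro p hp
    rw [orE, Finset.mem_filter, Finset.mem_product] at hp
    obtain ⟨⟨h1, -⟩, hadj⟩ := hp
    refine ⟨h1, ?_, hadj⟩
    rcases hbip _ _ hadj with ⟨h, -⟩ | ⟨-, h⟩
    · exact absurd h1 (Finset.disjoint_left.mp hdisj h)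
    · exact h
  have hswap : ∀ (A B : Finset V), (∀ p ∈ orE H A, p.2 ∈ B) →
      ∀ p ∈ orE H A, Prod.swap p ∈ orE H B := by
    intro A B hB p hp
    rw [orE, Finset.mem_filter, Finset.mem_product] at hp ⊢
    exact ⟨⟨hB p (by rw [orE, Finset.mem_filter, Finset.mem_product]; exact hp),
      Finset.mem_univ _⟩, hp.2.symm⟩
  have hXY : ∀ p ∈ orE H X, Prod.swap p ∈ orE H Y :=
    hswap X Y fun p hp => (hmemX p hp).2.1
  have hYX : ∀ p ∈ orE H Y, Prod.swap p ∈ orE H X :=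
    hswap Y X fun p hp => (hmemY p hp).2.1
  -- sum over orE H X of degree of second coordinate
  have hsum_snd : ∑ p ∈ orE H X, H.degree p.2 = ∑ y ∈ Y, (H.degree y) ^ 2 := by
    rw [← sum_orE_deg_fst H Y]
    exact Finset.sum_nbij' Prod.swap Prod.swap hXY hYX (by simp) (by simp) (by simp)
  have hcard_eq : (orE H X).card = (orE H Y).card :=
    Finset.card_nbij' Prod.swap Prod.swap hXY hYX (by intro a _; simp) (by intro a _; simp)
  -- card orE H X = e
  have hcardX : (orE H X).card = e := by
    have h2 : (orE H X).card + (orE H Y).card = 2 * e := by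
      rw [card_orE, card_orE, ← Finset.sum_union hdisj, hunion, he,
        SimpleGraph.sum_degrees_eq_twice_card_edges]
    omega
  have hsumX : ∑ x ∈ X, H.degree x = e := by rw [← card_orE, hcardX]
  have hsumY : ∑ y ∈ Y, H.degree y = e := by
    rw [← card_orE, ← hcard_eq, hcardX]
  -- Cauchy-Schwarz
  have hcsX : (e : ℝ) ^ 2 ≤ (X.card : ℝ) * ∑ x ∈ X, (H.degree x : ℝ) ^ 2 := by
    have := sq_sum_le_card_mul_sum_sq (s := X) (f := fun x => (H.degree x : ℝ))
    rw [← Nat.cast_sum, hsumX] at this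
    simpa using this
  have hcsY : (e : ℝ) ^ 2 ≤ (Y.card : ℝ) * ∑ y ∈ Y, (H.degree y : ℝ) ^ 2 := by
    have := sq_sum_le_card_mul_sum_sq (s := Y) (f := fun y => (H.degree y : ℝ))
    rw [← Nat.cast_sum, hsumY] at this
    simpa using this
  have hXpos : (0 : ℝ) < X.card := by exact_mod_cast Finset.card_pos.mpr hX
  have hYpos : (0 : ℝ) < Y.card := by exact_mod_cast Finset.card_pos.mpr hY
  set c : ℝ := (e : ℝ) * (1 / X.card + 1 / Y.card) with hc
  have hne : (orE H X).Nonempty := by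
    rw [← Finset.card_pos, hcardX]; exact hedge
  have hmain : ∑ p ∈ orE H X, c ≤
      ∑ p ∈ orE H X, ((H.degree p.1 : ℝ) + (H.degree p.2 : ℝ)) := by
    rw [Finset.sum_const, hcardX, Finset.sum_add_distrib]
    have h1 : ∑ p ∈ orE H X, (H.degree p.1 : ℝ) = ∑ x ∈ X, (H.degree x : ℝ) ^ 2 := by
      rw [← Nat.cast_sum, sum_orE_deg_fst]; push_cast; ring_nf
    have h2 : ∑ p ∈ orE H X, (H.degree p.2 : ℝ) = ∑ y ∈ Y, (H.degree y : ℝ) ^ 2 := by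
      rw [← Nat.cast_sum, hsum_snd]; push_cast; ring_nf
    rw [h1, h2, nsmul_eq_mul, hc]
    have hX' : (e : ℝ) * ((e : ℝ) / X.card) ≤ ∑ x ∈ X, (H.degree x : ℝ) ^ 2 := by
      calc (e:ℝ) * ((e:ℝ)/X.card) = (e:ℝ)^2 / X.card := by ring
        _ ≤ _ := by rw [div_le_iff₀ hXpos]; exact hcsX.trans_eq (mul_comm _ _)
    have hY' : (e : ℝ) * ((e : ℝ) / Y.card) ≤ ∑ y ∈ Y, (H.degree y : ℝ) ^ 2 := by
      calc (e:ℝ) * ((e:ℝ)/Y.card) = (e:ℝ)^2 / Y.card := by ring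
        _ ≤ _ := by rw [div_le_iff₀ hYpos]; exact hcsY.trans_eq (mul_comm _ _)
    calc (e : ℝ) * ((e : ℝ) * (1 / X.card + 1 / Y.card))
        = (e:ℝ) * ((e:ℝ)/X.card) + (e:ℝ) * ((e:ℝ)/Y.card) := by ring
      _ ≤ _ := by linarith
  obtain ⟨p, hp, hple⟩ := Finset.exists_le_of_sum_le hne hmain
  obtain ⟨hx, hy, hadj⟩ := hmemX p hp
  exact ⟨p.1, hx, p.2, hy, hadj, hple⟩
end

section
/- Let G be a graph on n vertices, with each edge coloured red, blue or yellow, such that the minimum degree of G is at least 7n/8. If R is a red component and B is a blue component of G with |R \ B| ≥ n/4 and |B \ R| ≥ n/4, then the symmetric difference R △ B is contained in a single yellow component of G; in particular, G has a yellow component of order at least n/2. -/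
open SimpleGraph

/-- In a graph with minimum degree at least `7n/8`, any two vertices outside a set `S`
    of size at least `n/4` have a common neighbour inside `S`. -/
lemma common_neighbor_aux {V : Type} [Fintype V] (G : SimpleGraph V) [DecidableRel G.Adj]
    (n : ℕ) (hn : Fintype.card V = n)
    (hdeg : ∀ v : V, 7 * (n : ℝ) / 8 ≤ G.degree v)
    (S : Set V) (hS : (n : ℝ) / 4 ≤ S.ncard) (u u' : V) (hu : u ∉ S) (hu' : u' ∉ S) :
    ∃ w ∈ S, G.Adj u w ∧ G.Adj u' w := by
  by_contra h
  push_neg at h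
  have key : ∀ v : V, (insert v (G.neighborSet v)).ncard + (insert v (G.neighborSet v))ᶜ.ncard = n := by
    intro v
    rw [Set.ncard_add_ncard_compl, Nat.card_eq_fintype_card, hn]
  have hins : ∀ v : V, (insert v (G.neighborSet v)).ncard = G.degree v + 1 := by
    intro v
    rw [Set.ncard_insert_of_notMem (by simp), Set.ncard_eq_toFinset_card',
      Set.toFinset_card, G.card_neighborSet_eq_degree]
  have hsub : S ⊆ (insert u (G.neighborSet u))ᶜ ∪ (insert u' (G.neighborSet u'))ᶜ := by
    intro w hw
    by_cases hadj : G.Adj u w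
    · right
      simp only [Set.mem_compl_iff, Set.mem_insert_iff, SimpleGraph.mem_neighborSet]
      rintro (rfl | hadj')
      exacts [hu' hw, h w hw hadj hadj']
    · left
      simp only [Set.mem_compl_iff, Set.mem_insert_iff, SimpleGraph.mem_neighborSet]
      rintro (rfl | hadj')
      exacts [hu hw, hadj hadj']
  have hcard : S.ncard ≤ (insert u (G.neighborSet u))ᶜ.ncard + (insert u' (G.neighborSet u'))ᶜ.ncard :=
    le_trans (Set.ncard_le_ncard hsub (Set.toFinite _)) (Set.ncard_union_le _ _)
  have k1 := key u
  have k2 := key u'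
  rw [hins u] at k1
  rw [hins u'] at k2
  have d1 := hdeg u
  have d2 := hdeg u'
  have hc : ((S.ncard : ℝ)) ≤ ((insert u (G.neighborSet u))ᶜ.ncard : ℝ) + ((insert u' (G.neighborSet u'))ᶜ.ncard : ℝ) := by
    exact_mod_cast hcard
  have e1 : ((G.degree u : ℝ)) + 1 + ((insert u (G.neighborSet u))ᶜ.ncard : ℝ) = n := by
    exact_mod_cast k1
  have e2 : ((G.degree u' : ℝ)) + 1 + ((insert u' (G.neighborSet u'))ᶜ.ncard : ℝ) = n := by
    exact_mod_cast k2
  linarith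

/-- An edge between `R \ B` and `B \ R` must be yellow. -/
lemma edge_yellow_aux {V : Type} (G : SimpleGraph V) (c : Sym2 V → Fin 3)
    (R : (colSub G c 0).ConnectedComponent) (B : (colSub G c 1).ConnectedComponent)
    (u w : V) (hadj : G.Adj u w)
    (huR : u ∈ R.supp) (huB : u ∉ B.supp) (hwB : w ∈ B.supp) (hwR : w ∉ R.supp) :
    (colSub G c 2).Adj u w := by
  refine ⟨hadj, ?_⟩
  have h0 : c s(u, w) ≠ 0 := by
    intro h0
    have : (colSub G c 0).Adj u w := ⟨hadj, h0⟩
    have := SimpleGraph.ConnectedComponent.sound this.reachable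
    rw [SimpleGraph.ConnectedComponent.mem_supp_iff] at huR hwR
    exact hwR (this ▸ huR)
  have h1 : c s(u, w) ≠ 1 := by
    intro h1
    have : (colSub G c 1).Adj u w := ⟨hadj, h1⟩
    have := SimpleGraph.ConnectedComponent.sound this.reachable
    rw [SimpleGraph.ConnectedComponent.mem_supp_iff] at huB hwB
    exact huB (this ▸ hwB)
  omega

/-- In a 3-coloured graph with minimum degree at least `7n/8`, if `R` is a red
    component and `B` a blue component with `|R \ B| ≥ n/4` and `|B \ R| ≥ n/4`,
    then the symmetric difference `R △ B` is contained in a single yellow component,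
    which has order at least `n/2`. -/
theorem symmdiff_in_yellow_component {V : Type} [Fintype V]
    (G : SimpleGraph V) [DecidableRel G.Adj] (c : Sym2 V → Fin 3)
    (n : ℕ) (hn : Fintype.card V = n)
    (hdeg : ∀ v : V, 7 * (n : ℝ) / 8 ≤ G.degree v)
    (R : (colSub G c 0).ConnectedComponent) (B : (colSub G c 1).ConnectedComponent)
    (hRB : (n : ℝ) / 4 ≤ ((R.supp \ B.supp).ncard : ℝ))
    (hBR : (n : ℝ) / 4 ≤ ((B.supp \ R.supp).ncard : ℝ)) :
    ∃ Y : (colSub G c 2).ConnectedComponent,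
      (R.supp \ B.supp) ∪ (B.supp \ R.supp) ⊆ Y.supp ∧
        (n : ℝ) / 2 ≤ (Y.supp.ncard : ℝ) := by
  -- n is positive
  have hV : Nonempty V := by
    obtain ⟨v, -⟩ := R.exists_rep
    exact ⟨v⟩
  have hnpos : 0 < n := hn ▸ Fintype.card_pos
  -- R \ B is nonempty
  have hRBne : (R.supp \ B.supp).Nonempty := by
    rw [← Set.ncard_pos (Set.toFinite _)]
    have hq : (0:ℝ) < ((R.supp \ B.supp).ncard : ℝ) :=
      lt_of_lt_of_le (by positivity) hRB
    exact_mod_cast hq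
  obtain ⟨u₀, hu₀⟩ := hRBne
  -- membership facts
  have memRB : ∀ x ∈ R.supp \ B.supp, x ∉ B.supp \ R.supp := fun x hx hx' => hx'.2 hx.1
  have memBR : ∀ x ∈ B.supp \ R.supp, x ∉ R.supp \ B.supp := fun x hx hx' => hx.2 hx'.1
  -- a yellow neighbour of u₀ in B \ R
  obtain ⟨w₀, hw₀, hadj₀, -⟩ := common_neighbor_aux G n hn hdeg (B.supp \ R.supp) hBR u₀ u₀
    (memRB u₀ hu₀) (memRB u₀ hu₀)
  have hyel₀ : (colSub G c 2).Adj u₀ w₀ :=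
    edge_yellow_aux G c R B u₀ w₀ hadj₀ hu₀.1 hu₀.2 hw₀.1 hw₀.2
  refine ⟨(colSub G c 2).connectedComponentMk u₀, ?_, ?_⟩
  · -- containment
    intro x hx
    rw [SimpleGraph.ConnectedComponent.mem_supp_iff]
    rcases hx with hx | hx
    · -- x ∈ R \ B : common neighbour of x and u₀ in B \ R
      obtain ⟨w, hw, hax, ha₀⟩ := common_neighbor_aux G n hn hdeg (B.supp \ R.supp) hBR x u₀
        (memRB x hx) (memRB u₀ hu₀)
      have y1 : (colSub G c 2).Adj x w :=
        edge_yellow_aux G c R B x w hax hx.1 hx.2 hw.1 hw.2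
      have y2 : (colSub G c 2).Adj u₀ w :=
        edge_yellow_aux G c R B u₀ w ha₀ hu₀.1 hu₀.2 hw.1 hw.2
      exact SimpleGraph.ConnectedComponent.sound (y1.reachable.trans y2.reachable.symm)
    · -- x ∈ B \ R : common neighbour of x and w₀ in R \ B
      obtain ⟨w, hw, hax, ha₀⟩ := common_neighbor_aux G n hn hdeg (R.supp \ B.supp) hRB x w₀
        (memBR x hx) (memBR w₀ hw₀)
      have y1 : (colSub G c 2).Adj w x :=
        edge_yellow_aux G c R B w x hax.symm hw.1 hw.2 hx.1 hx.2
      have y2 : (colSub G c 2).Adj w w₀ :=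
        edge_yellow_aux G c R B w w₀ ha₀.symm hw.1 hw.2 hw₀.1 hw₀.2
      exact SimpleGraph.ConnectedComponent.sound
        (y1.reachable.symm.trans (y2.reachable.trans hyel₀.reachable.symm))
  · -- cardinality
    have hsub : (R.supp \ B.supp) ∪ (B.supp \ R.supp) ⊆
        ((colSub G c 2).connectedComponentMk u₀).supp := by
      intro x hx
      rw [SimpleGraph.ConnectedComponent.mem_supp_iff]
      rcases hx with hx | hx
      · obtain ⟨w, hw, hax, ha₀⟩ := common_neighbor_aux G n hn hdeg (B.supp \ R.supp) hBR x u₀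
          (memRB x hx) (memRB u₀ hu₀)
        have y1 : (colSub G c 2).Adj x w :=
          edge_yellow_aux G c R B x w hax hx.1 hx.2 hw.1 hw.2
        have y2 : (colSub G c 2).Adj u₀ w :=
          edge_yellow_aux G c R B u₀ w ha₀ hu₀.1 hu₀.2 hw.1 hw.2
        exact SimpleGraph.ConnectedComponent.sound (y1.reachable.trans y2.reachable.symm)
      · obtain ⟨w, hw, hax, ha₀⟩ := common_neighbor_aux G n hn hdeg (R.supp \ B.supp) hRB x w₀
          (memBR x hx) (memBR w₀ hw₀)
        have y1 : (colSub G c 2).Adj w x :=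
          edge_yellow_aux G c R B w x hax.symm hw.1 hw.2 hx.1 hx.2
        have y2 : (colSub G c 2).Adj w w₀ :=
          edge_yellow_aux G c R B w w₀ ha₀.symm hw.1 hw.2 hw₀.1 hw₀.2
        exact SimpleGraph.ConnectedComponent.sound
          (y1.reachable.symm.trans (y2.reachable.trans hyel₀.reachable.symm))
    have hdisj : Disjoint (R.supp \ B.supp) (B.supp \ R.supp) := disjoint_sdiff_sdiff
    have h1 : ((R.supp \ B.supp) ∪ (B.supp \ R.supp)).ncard =
        (R.supp \ B.supp).ncard + (B.supp \ R.supp).ncard :=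
      Set.ncard_union_eq hdisj (Set.toFinite _) (Set.toFinite _)
    have h2 : ((R.supp \ B.supp) ∪ (B.supp \ R.supp)).ncard ≤
        ((colSub G c 2).connectedComponentMk u₀).supp.ncard :=
      Set.ncard_le_ncard hsub (Set.toFinite _)
    have h2' : (((R.supp \ B.supp) ∪ (B.supp \ R.supp)).ncard : ℝ) ≤
        (((colSub G c 2).connectedComponentMk u₀).supp.ncard : ℝ) := by exact_mod_cast h2
    have h1' : (((R.supp \ B.supp) ∪ (B.supp \ R.supp)).ncard : ℝ) =
        ((R.supp \ B.supp).ncard : ℝ) + ((B.supp \ R.supp).ncard : ℝ) := by exact_mod_cast h1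
    linarith
end

section
/- Let G be a graph on n vertices with minimum degree at least (2n−5)/3. If X is an independent set of three vertices in G, then there exists a vertex of G adjacent to all three vertices of X. -/
open SimpleGraph

/-- In a graph on `n` vertices with minimum degree at least `(2n-5)/3`, every
    independent set of three vertices has a common neighbour. -/
theorem independent_triple_common_neighbour {V : Type} [Fintype V]
    (G : SimpleGraph V) [DecidableRel G.Adj]
    (n : ℕ) (hn : Fintype.card V = n)
    (hdeg : ∀ v : V, (2 * (n : ℝ) - 5) / 3 ≤ G.degree v)
    (X : Finset V) (hX : X.card = 3)
    (hind : ∀ x ∈ X, ∀ y ∈ X, ¬ G.Adj x y) :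
    ∃ w : V, ∀ x ∈ X, G.Adj w x := by
  classical
  by_contra h
  push_neg at h
  have hn3 : 3 ≤ n := by
    rw [← hn, ← hX]
    exact Finset.card_le_univ X
  -- each neighborhood avoids X
  have hdegeq : ∀ x ∈ X, G.degree x = (Xᶜ.filter (fun v => G.Adj x v)).card := by
    intro x hx
    rw [← card_neighborFinset_eq_degree]
    congr 1
    ext y
    simp only [mem_neighborFinset, Finset.mem_filter, Finset.mem_compl]
    constructor
    · intro hy
      exact ⟨fun hyX => hind x hx y hyX hy, hy⟩
    · exact fun hy => hy.2
  -- double counting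
  have keyn : ∑ x ∈ X, G.degree x = ∑ v ∈ Xᶜ, (X.filter (fun x => G.Adj v x)).card := by
    rw [Finset.sum_congr rfl (fun x hx => hdegeq x hx)]
    simp only [Finset.card_filter]
    rw [Finset.sum_comm]
    exact Finset.sum_congr rfl fun v _ => Finset.sum_congr rfl fun x _ => if_congr (G.adj_comm _ _) rfl rfl
  have key : ∑ x ∈ X, (G.degree x : ℝ) =
      ∑ v ∈ Xᶜ, ((X.filter (fun x => G.Adj v x)).card : ℝ) := by
    exact_mod_cast congrArg (Nat.cast : ℕ → ℝ) keyn
  -- each vertex sees at most 2 of X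
  have hle2 : ∀ v ∈ Xᶜ, ((X.filter (fun x => G.Adj v x)).card : ℝ) ≤ 2 := by
    intro v _
    obtain ⟨x, hx, hnadj⟩ := h v
    have hss : X.filter (fun x => G.Adj v x) ⊂ X := by
      refine Finset.ssubset_iff_of_subset (Finset.filter_subset _ _) |>.mpr ?_
      exact ⟨x, hx, by simp [hnadj]⟩
    have := Finset.card_lt_card hss
    rw [hX] at this
    have : (X.filter (fun x => G.Adj v x)).card ≤ 2 := by omega
    exact_mod_cast this
  have hXc : ((Xᶜ.card : ℝ)) = (n : ℝ) - 3 := by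
    have : Xᶜ.card = n - 3 := by
      rw [Finset.card_compl, hX, hn]
    rw [this]
    have : ((n - 3 : ℕ) : ℝ) = (n : ℝ) - 3 := by
      push_cast [hn3]
      ring
    rw [this]
  have hlb : 2 * (n : ℝ) - 5 ≤ ∑ x ∈ X, (G.degree x : ℝ) := by
    calc 2 * (n : ℝ) - 5 = 3 * ((2 * (n : ℝ) - 5) / 3) := by ring
    _ ≤ ∑ x ∈ X, (G.degree x : ℝ) := by
        have := Finset.card_nsmul_le_sum X (fun x => (G.degree x : ℝ))
          ((2 * (n : ℝ) - 5) / 3) (fun x _ => hdeg x)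
        rw [hX] at this
        simpa using this
  have hub : ∑ v ∈ Xᶜ, ((X.filter (fun x => G.Adj v x)).card : ℝ) ≤ 2 * ((n : ℝ) - 3) := by
    calc ∑ v ∈ Xᶜ, ((X.filter (fun x => G.Adj v x)).card : ℝ)
        ≤ ∑ _v ∈ Xᶜ, (2 : ℝ) := Finset.sum_le_sum hle2
    _ = 2 * ((n : ℝ) - 3) := by rw [Finset.sum_const, nsmul_eq_mul, hXc]; ring
  rw [key] at hlb
  linarith
end

section
/- There exists an integer n₀ such that the following holds for every n ≥ n₀. Let G be a graph on n vertices, with each edge coloured red or blue, such that the minimum degree of G is at least (2n−5)/3, and suppose G has a blue component of order at most (n+1)/6. Then there exists a set U of vertices that is connected in red, with |U| ≤ 27·log n, such that the set N_r(U) of vertices outside U joined by a red edge to some vertex of U satisfies |N_r(U)| ≥ 2n/3 − 27·log n (log denotes the natural logarithm). -/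
open SimpleGraph

open Finset

section Aux
variable {V : Type} (R : SimpleGraph V)

lemma my_connected_singleton (y : V) : (R.induce {y}).Connected := by
  haveI : Nonempty (↥({y} : Set V)) := ⟨⟨y, rfl⟩⟩
  refine ⟨fun u v => ?_⟩
  have : u = v := Subtype.ext (by
    have hu := u.2; have hv := v.2
    simp only [Set.mem_singleton_iff] at hu hv
    rw [hu, hv])
  rw [this]

lemma my_connected_insert {s : Set V} (h : (R.induce s).Connected) {w a : V}
    (hw : w ∈ s) (ha : R.Adj w a) : (R.induce (insert a s)).Connected := by
  have h2 : (R.induce ({w, a} : Set V)).Connected := R.induce_pair_connected_of_adj ha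
  have hu : s ∪ {w, a} = insert a s := by
    ext z; simp only [Set.mem_union, Set.mem_insert_iff, Set.mem_singleton_iff]
    constructor
    · rintro (hz | hz | hz) <;> simp_all
    · rintro (rfl | hz) <;> simp_all
  have := SimpleGraph.induce_union_connected h.preconnected h2.preconnected ⟨w, hw, by simp⟩
  rwa [hu] at this

variable [Fintype V] [DecidableEq V] [DecidableRel R.Adj]

/-- outer red neighbourhood of a finset -/
def nOut (U : Finset V) : Finset V :=
  univ.filter (fun v => v ∉ U ∧ ∃ u ∈ U, R.Adj u v)

/-- closed red neighbourhood -/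
def wOut (U : Finset V) : Finset V := U ∪ nOut R U

lemma mem_nOut {U : Finset V} {v : V} :
    v ∈ nOut R U ↔ v ∉ U ∧ ∃ u ∈ U, R.Adj u v := by simp [nOut]

lemma mem_wOut {U : Finset V} {v : V} :
    v ∈ wOut R U ↔ v ∈ U ∨ v ∈ nOut R U := by simp [wOut]

lemma subset_wOut (U : Finset V) : U ⊆ wOut R U := subset_union_left

lemma mem_wOut_of_adj {U : Finset V} {u z : V} (hu : u ∈ U) (h : R.Adj u z) :
    z ∈ wOut R U := by
  by_cases hz : z ∈ U
  · exact (mem_wOut R).2 (Or.inl hz)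
  · exact (mem_wOut R).2 (Or.inr ((mem_nOut R).2 ⟨hz, u, hu, h⟩))

lemma wOut_mono {U U' : Finset V} (h : U ⊆ U') : wOut R U ⊆ wOut R U' := by
  intro v hv
  rcases (mem_wOut R).1 hv with hv | hv
  · exact subset_wOut R U' (h hv)
  · obtain ⟨-, u, hu, hadj⟩ := (mem_nOut R).1 hv
    exact mem_wOut_of_adj R (h hu) hadj

lemma card_wOut (U : Finset V) : (wOut R U).card = U.card + (nOut R U).card := by
  rw [wOut, card_union_of_disjoint]
  rw [Finset.disjoint_left]
  intro a ha h2
  exact (((mem_nOut R).1 h2).1 ha).elim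

omit [Fintype V] [DecidableEq V] in
lemma sum_adj_comm (N X : Finset V) :
    ∑ u ∈ N, ((X.filter (fun x => R.Adj u x)).card : ℝ)
      = ∑ x ∈ X, ((N.filter (fun u => R.Adj u x)).card : ℝ) := by
  have h : ∀ (s : Finset V) (p : V → Prop) [DecidablePred p],
      ((s.filter p).card : ℝ) = ∑ a ∈ s, (if p a then (1:ℝ) else 0) := by
    intro s p hp
    rw [Finset.card_filter]
    push_cast
    rfl
  simp_rw [h]
  rw [Finset.sum_comm]

end Aux

lemma numeric_keyB (dd nn ss : ℝ) (h1 : 100 ≤ dd) (h2 : dd ≤ nn/6)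
    (h3 : ss ≤ (nn+1)/6) (h4 : (100000000:ℝ) ≤ nn)
    (h5 : (dd - 2/3) * ((2*nn-5)/3 - (ss-1) - dd/2) ≤ (2*nn/3 - dd)*(dd/2)) : False := by
  nlinarith [mul_nonneg (by linarith : (0:ℝ) ≤ dd - 2/3) (by linarith : (0:ℝ) ≤ (nn+1)/6 - ss),
    mul_nonneg (by linarith : (0:ℝ) ≤ dd - 100) (by linarith : (0:ℝ) ≤ nn)]

section Key
variable {V : Type} [Fintype V] [DecidableEq V]

set_option maxHeartbeats 1000000 in
/-- The key expansion step, abstracted: `G` ambient graph, `R` red graph,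
`S` the (finset of the) small blue component. -/
lemma key_step (G : SimpleGraph V) [DecidableRel G.Adj]
    (R : SimpleGraph V) [DecidableRel R.Adj]
    (n : ℕ) (hcard : Fintype.card V = n) (hnR : (100000000 : ℝ) ≤ (n : ℝ))
    (S : Finset V)
    (hScard : (S.card : ℝ) ≤ ((n : ℝ) + 1) / 6)
    (hdegS : ∀ x ∈ S, (2 * (n : ℝ) - 5) / 3 ≤ ((G.neighborFinset x).card : ℝ))
    (hSnbr : ∀ x ∈ S, ∀ z, G.Adj x z → R.Adj x z ∨ z ∈ S)
    (y : V) (hyS : y ∈ S)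
    (U : Finset V) (hyU : y ∈ U)
    (hconn : (R.induce (U : Set V)).Connected)
    (hd100 : (100 : ℝ) ≤ 2 * (n : ℝ) / 3 - ((wOut R U).card : ℝ))
    (hd6 : 2 * (n : ℝ) / 3 - ((wOut R U).card : ℝ) ≤ (n : ℝ) / 6) :
    ∃ U' : Finset V, U ⊆ U' ∧ y ∈ U' ∧ (R.induce (U' : Set V)).Connected ∧
      U'.card ≤ U.card + 2 ∧
      ((wOut R U).card : ℝ) + (2 * (n : ℝ) / 3 - ((wOut R U).card : ℝ)) / 2
        ≤ ((wOut R U').card : ℝ) := by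
  classical
  set W : Finset V := wOut R U with hWdef
  set N : Finset V := nOut R U with hNdef
  set X : Finset V := univ \ W with hXdef
  set d : ℝ := 2 * (n : ℝ) / 3 - (W.card : ℝ) with hddef
  have hd100' : (100:ℝ) ≤ d := hd100
  have hd6' : d ≤ (n:ℝ)/6 := hd6
  have hn0 : (0:ℝ) < (n:ℝ) := by linarith
  have hWcardR : (W.card : ℝ) = 2 * (n:ℝ) / 3 - d := by rw [hddef]; ring
  have hWlen : W.card ≤ n := by
    rw [← hcard, ← card_univ]; exact card_le_card (subset_univ _)
  have hXcardR : (X.card : ℝ) = (n : ℝ) - (W.card : ℝ) := by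
    rw [hXdef, card_sdiff_of_subset (subset_univ _), card_univ, hcard, Nat.cast_sub hWlen]
  have hXW : ∀ v, v ∈ X ↔ v ∉ W := by
    intro v; rw [hXdef, mem_sdiff]; simp
  have hpart : ∀ z, z ∉ U → z ∉ N → z ∈ X := by
    intro z h1 h2
    rw [hXW]
    intro hW
    rcases (mem_wOut R).1 hW with h | h
    · exact h1 h
    · exact h2 h
  have hyW : y ∈ W := subset_wOut R U hyU
  -- F1 : many blue-component vertices outside W
  have hBX : d - 2/3 ≤ ((S ∩ X).card : ℝ) := by
    have hsub : G.neighborFinset y ⊆ W.erase y ∪ (S ∩ X) := by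
      intro z hz
      rw [SimpleGraph.mem_neighborFinset] at hz
      by_cases hzW : z ∈ W
      · exact mem_union_left _ (mem_erase.2 ⟨hz.ne', hzW⟩)
      · rcases hSnbr y hyS z hz with hr | hb
        · exact absurd (mem_wOut_of_adj R hyU hr) hzW
        · exact mem_union_right _ (mem_inter.2 ⟨hb, (hXW z).2 hzW⟩)
    have hle := (card_le_card hsub).trans (card_union_le _ _)
    have herase : ((W.erase y).card : ℝ) = (W.card : ℝ) - 1 := by
      rw [card_erase_of_mem hyW, Nat.cast_sub (by exact card_pos.2 ⟨y, hyW⟩)]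
      simp
    have hle2 : ((G.neighborFinset y).card : ℝ)
        ≤ ((W.erase y).card : ℝ) + ((S ∩ X).card : ℝ) := by exact_mod_cast hle
    have hdy := hdegS y hyS
    rw [herase, hWcardR] at hle2
    linarith
  -- F3 : every x ∈ S ∩ X has a red neighbour in N
  have hF3 : ∀ x ∈ S ∩ X, ∃ u ∈ N, R.Adj x u := by
    intro x hx
    by_contra hno
    push_neg at hno
    obtain ⟨hxS, hxX⟩ := mem_inter.1 hx
    have hxW : x ∉ W := (hXW x).1 hxX
    have hxU : x ∉ U := fun h => hxW (subset_wOut R U h)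
    have hsub : G.neighborFinset x ⊆ X.erase x ∪ (S ∩ W) := by
      intro z hz
      rw [SimpleGraph.mem_neighborFinset] at hz
      by_cases hzW : z ∈ W
      · rcases hSnbr x hxS z hz with hr | hb
        · rcases (mem_wOut R).1 hzW with hzU | hzN
          · exact absurd ((mem_nOut R).2 ⟨hxU, z, hzU, hr.symm⟩)
              (fun h => hxW ((mem_wOut R).2 (Or.inr h)))
          · exact absurd hr (hno z hzN)
        · exact mem_union_right _ (mem_inter.2 ⟨hb, hzW⟩)
      · exact mem_union_left _ (mem_erase.2 ⟨hz.ne', (hXW z).2 hzW⟩)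
    have hle := (card_le_card hsub).trans (card_union_le _ _)
    have herase : ((X.erase x).card : ℝ) = (X.card : ℝ) - 1 := by
      rw [card_erase_of_mem hxX, Nat.cast_sub (by exact card_pos.2 ⟨x, hxX⟩)]
      simp
    have hBsplit : ((S ∩ W).card : ℝ) + ((S ∩ X).card : ℝ) ≤ (S.card : ℝ) := by
      have hdisj : Disjoint (S ∩ W) (S ∩ X) := by
        rw [Finset.disjoint_left]
        intro a ha1 ha2
        exact ((hXW a).1 (mem_inter.1 ha2).2) (mem_inter.1 ha1).2
      have := card_le_card
        (union_subset inter_subset_left inter_subset_left : (S ∩ W) ∪ (S ∩ X) ⊆ S)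
      rw [card_union_of_disjoint hdisj] at this
      exact_mod_cast this
    have hle2 : ((G.neighborFinset x).card : ℝ)
        ≤ ((X.erase x).card : ℝ) + ((S ∩ W).card : ℝ) := by exact_mod_cast hle
    have hdx := hdegS x hxS
    rw [herase, hXcardR, hWcardR] at hle2
    linarith
  -- F2 : degree split for x ∈ S ∩ X
  have hF2 : ∀ x ∈ S ∩ X,
      (2 * (n : ℝ) - 5) / 3 - ((S.card : ℝ) - 1)
        ≤ ((N.filter (fun u => R.Adj u x)).card : ℝ)
          + ((X.filter (fun z => R.Adj x z)).card : ℝ) := by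
    intro x hx
    obtain ⟨hxS, hxX⟩ := mem_inter.1 hx
    have hxW : x ∉ W := (hXW x).1 hxX
    have hxU : x ∉ U := fun h => hxW (subset_wOut R U h)
    have hsub : G.neighborFinset x ⊆
        S.erase x ∪ (N.filter (fun u => R.Adj u x) ∪ X.filter (fun z => R.Adj x z)) := by
      intro z hz
      rw [SimpleGraph.mem_neighborFinset] at hz
      rcases hSnbr x hxS z hz with hr | hb
      · have hzU : z ∉ U := by
          intro hzU
          exact hxW ((mem_wOut R).2 (Or.inr ((mem_nOut R).2 ⟨hxU, z, hzU, hr.symm⟩)))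
        by_cases hzN : z ∈ N
        · exact mem_union_right _ (mem_union_left _ (mem_filter.2 ⟨hzN, hr.symm⟩))
        · exact mem_union_right _ (mem_union_right _
            (mem_filter.2 ⟨hpart z hzU hzN, hr⟩))
      · exact mem_union_left _ (mem_erase.2 ⟨hz.ne', hb⟩)
    have hle := (card_le_card hsub).trans
      ((card_union_le _ _).trans (Nat.add_le_add_left (card_union_le _ _) _))
    have herase : ((S.erase x).card : ℝ) = (S.card : ℝ) - 1 := by
      rw [card_erase_of_mem hxS, Nat.cast_sub (by exact card_pos.2 ⟨x, hxS⟩)]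
      simp
    have hle2 : ((G.neighborFinset x).card : ℝ) ≤ ((S.erase x).card : ℝ)
        + (((N.filter (fun u => R.Adj u x)).card : ℝ)
          + ((X.filter (fun z => R.Adj x z)).card : ℝ)) := by exact_mod_cast hle
    have hdx := hdegS x hxS
    rw [herase] at hle2
    linarith
  -- main case split
  by_cases hcaseA : ∃ x ∈ S ∩ X, d / 2 ≤ ((X.filter (fun z => R.Adj x z)).card : ℝ)
  · -- Case A
    obtain ⟨x, hx, hxgain⟩ := hcaseA
    obtain ⟨u, huN, hxu⟩ := hF3 x hx
    obtain ⟨hxS, hxX⟩ := mem_inter.1 hx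
    have hxW : x ∉ W := (hXW x).1 hxX
    obtain ⟨huU, w, hwU, hwu⟩ := (mem_nOut R).1 huN
    refine ⟨insert x (insert u U), ?_, ?_, ?_, ?_, ?_⟩
    · exact (subset_insert u U).trans (subset_insert x _)
    · exact mem_insert_of_mem (mem_insert_of_mem hyU)
    · rw [coe_insert, coe_insert]
      refine my_connected_insert R ?_ (Set.mem_insert u (↑U : Set V)) hxu.symm
      exact my_connected_insert R hconn (mem_coe.2 hwU) hwu
    · exact (card_insert_le _ _).trans (Nat.succ_le_succ (card_insert_le _ _))
    · show (W.card : ℝ) + d / 2 ≤ ((wOut R (insert x (insert u U))).card : ℝ)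
      have hgain : W ∪ insert x (X.filter (fun z => R.Adj x z))
          ⊆ wOut R (insert x (insert u U)) := by
        intro z hz
        rcases mem_union.1 hz with hzW | hzS
        · exact wOut_mono R ((subset_insert _ _).trans (subset_insert _ _)) hzW
        · rcases mem_insert.1 hzS with rfl | hzS
          · exact subset_wOut _ _ (mem_insert_self _ _)
          · exact mem_wOut_of_adj R (mem_insert_self x _) (mem_filter.1 hzS).2
      have hdisj : Disjoint W (insert x (X.filter (fun z => R.Adj x z))) := by
        rw [disjoint_right]
        intro a ha
        rcases mem_insert.1 ha with rfl | ha
        · exact hxW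
        · exact (hXW a).1 (mem_filter.1 ha).1
      have hxnotin : x ∉ X.filter (fun z => R.Adj x z) := by
        intro h
        exact R.irrefl (mem_filter.1 h).2
      have hcge := card_le_card hgain
      rw [card_union_of_disjoint hdisj, card_insert_of_notMem hxnotin] at hcge
      have hfin : (W.card : ℝ) + (((X.filter (fun z => R.Adj x z)).card : ℝ) + 1)
          ≤ ((wOut R (insert x (insert u U))).card : ℝ) := by exact_mod_cast hcge
      linarith
  · -- Case B
    push_neg at hcaseA
    set cst : ℝ := (2 * (n : ℝ) - 5) / 3 - ((S.card : ℝ) - 1) - d / 2 with hcst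
    have hcst0 : 0 ≤ cst := by
      rw [hcst]
      linarith
    have hdhalf0 : (0:ℝ) ≤ d/2 := div_nonneg (le_trans (by norm_num) hd100') (by norm_num)
    have hperx : ∀ x ∈ S ∩ X, cst ≤ ((N.filter (fun u => R.Adj u x)).card : ℝ) := by
      intro x hx
      have h1 := hF2 x hx
      have h2 := le_of_lt (hcaseA x hx)
      rw [hcst]
      linarith
    have hsum1 : ((S ∩ X).card : ℝ) * cst
        ≤ ∑ x ∈ S ∩ X, ((N.filter (fun u => R.Adj u x)).card : ℝ) := by
      have := Finset.card_nsmul_le_sum (S ∩ X)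
        (fun x => ((N.filter (fun u => R.Adj u x)).card : ℝ)) cst hperx
      rwa [nsmul_eq_mul] at this
    have hsum2 : (d - 2/3) * cst ≤ ((S ∩ X).card : ℝ) * cst :=
      mul_le_mul_of_nonneg_right hBX hcst0
    have hsum3 : ∑ x ∈ S ∩ X, ((N.filter (fun u => R.Adj u x)).card : ℝ)
        ≤ ∑ x ∈ X, ((N.filter (fun u => R.Adj u x)).card : ℝ) := by
      refine Finset.sum_le_sum_of_subset_of_nonneg inter_subset_right ?_
      intro i _ _
      exact Nat.cast_nonneg _
    have hsum4 := sum_adj_comm R N X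
    have hpig : ∃ u ∈ N, d / 2 ≤ ((X.filter (fun z => R.Adj u z)).card : ℝ) := by
      by_contra hno
      push_neg at hno
      have hbound : ∑ u ∈ N, ((X.filter (fun z => R.Adj u z)).card : ℝ)
          ≤ (N.card : ℝ) * (d / 2) := by
        have := Finset.sum_le_card_nsmul N
          (fun u => ((X.filter (fun z => R.Adj u z)).card : ℝ)) (d / 2)
          (fun u hu => le_of_lt (hno u hu))
        rwa [nsmul_eq_mul] at this
      have hNW : (N.card : ℝ) ≤ (W.card : ℝ) := by
        have h9 := card_wOut R U
        rw [← hWdef, ← hNdef] at h9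
        exact_mod_cast by omega
      have hchain : (d - 2/3) * cst ≤ (2 * (n:ℝ)/3 - d) * (d / 2) := by
        calc (d - 2/3) * cst ≤ ((S ∩ X).card : ℝ) * cst := hsum2
          _ ≤ ∑ x ∈ S ∩ X, ((N.filter (fun u => R.Adj u x)).card : ℝ) := hsum1
          _ ≤ ∑ x ∈ X, ((N.filter (fun u => R.Adj u x)).card : ℝ) := hsum3
          _ = ∑ u ∈ N, ((X.filter (fun z => R.Adj u z)).card : ℝ) := hsum4.symm
          _ ≤ (N.card : ℝ) * (d / 2) := hbound
          _ ≤ (W.card : ℝ) * (d / 2) := mul_le_mul_of_nonneg_right hNW hdhalf0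
          _ = (2 * (n:ℝ)/3 - d) * (d / 2) := by rw [hWcardR]
      rw [hcst] at hchain
      exact numeric_keyB d (n:ℝ) (S.card : ℝ) hd100' hd6' hScard hnR hchain
    obtain ⟨u, huN, hugain⟩ := hpig
    obtain ⟨huU, w, hwU, hwu⟩ := (mem_nOut R).1 huN
    refine ⟨insert u U, subset_insert _ _, mem_insert_of_mem hyU, ?_, ?_, ?_⟩
    · rw [coe_insert]
      exact my_connected_insert R hconn (mem_coe.2 hwU) hwu
    · exact (card_insert_le _ _).trans (by omega)
    · show (W.card : ℝ) + d / 2 ≤ ((wOut R (insert u U)).card : ℝ)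
      have hgain : W ∪ X.filter (fun z => R.Adj u z) ⊆ wOut R (insert u U) := by
        intro z hz
        rcases mem_union.1 hz with hzW | hzS
        · exact wOut_mono R (subset_insert _ _) hzW
        · exact mem_wOut_of_adj R (mem_insert_self u _) (mem_filter.1 hzS).2
      have hdisj : Disjoint W (X.filter (fun z => R.Adj u z)) := by
        rw [disjoint_right]
        intro a ha
        exact (hXW a).1 (mem_filter.1 ha).1
      have hcge := card_le_card hgain
      rw [card_union_of_disjoint hdisj] at hcge
      have hfin : (W.card : ℝ) + ((X.filter (fun z => R.Adj u z)).card : ℝ)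
          ≤ ((wOut R (insert u U)).card : ℝ) := by exact_mod_cast hcge
      linarith

end Key



set_option maxHeartbeats 1000000 in
/-- There exists `n₀` such that for every `n ≥ n₀`: if a 2-coloured graph on `n`
    vertices with minimum degree at least `(2n-5)/3` has a blue component of order
    at most `(n+1)/6`, then there is a set `U`, connected in red, with
    `|U| ≤ 27 log n`, whose red neighbourhood `N_r(U)` (the vertices outside `U`
    joined by a red edge to `U`) has size at least `2n/3 - 27 log n`. -/
theorem red_star :
    ∃ n₀ : ℕ, ∀ n : ℕ, n₀ ≤ n →
      ∀ (V : Type) [Fintype V] (G : SimpleGraph V) [DecidableRel G.Adj]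
        (c : Sym2 V → Fin 2),
        Fintype.card V = n →
        (∀ v : V, (2 * (n : ℝ) - 5) / 3 ≤ G.degree v) →
        (∃ B : (colSub G c 1).ConnectedComponent,
          (B.supp.ncard : ℝ) ≤ ((n : ℝ) + 1) / 6) →
        ∃ U : Set V, ((colSub G c 0).induce U).Connected ∧
          (U.ncard : ℝ) ≤ 27 * Real.log n ∧
          2 * (n : ℝ) / 3 - 27 * Real.log n ≤
            (({v : V | v ∉ U ∧ ∃ u ∈ U, (colSub G c 0).Adj u v}).ncard : ℝ) := by
  refine ⟨100000000, ?_⟩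
  intro n hn V iV G iG c hcard hdeg hex
  classical
  obtain ⟨B, hB⟩ := hex
  have hnR : (100000000 : ℝ) ≤ (n : ℝ) := by exact_mod_cast hn
  have hn0 : (0:ℝ) < (n:ℝ) := by linarith
  -- logarithm bound
  have hL : (18:ℝ) ≤ Real.log n := by
    rw [Real.le_log_iff_exp_le hn0]
    have h1 : Real.exp 18 = Real.exp 1 ^ (18:ℕ) := by
      rw [← Real.exp_nat_mul]; norm_num
    have h2 : Real.exp 1 ^ (18:ℕ) ≤ (2.7182818286:ℝ)^(18:ℕ) :=
      pow_le_pow_left₀ (Real.exp_pos 1).le (le_of_lt Real.exp_one_lt_d9) 18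
    have h3 : (2.7182818286:ℝ)^(18:ℕ) ≤ 100000000 := by norm_num
    linarith
  have hL0 : (0:ℝ) < Real.log n := by linarith
  -- the blue component as a finset
  obtain ⟨y, hyrep⟩ := B.exists_rep
  have hyB : y ∈ B.supp := by
    rw [SimpleGraph.ConnectedComponent.mem_supp_iff]; exact hyrep
  set S : Finset V := B.supp.toFinset with hSdef
  have hSmem : ∀ v, v ∈ S ↔ v ∈ B.supp := by
    intro v; rw [hSdef]; exact Set.mem_toFinset
  have hScard : (S.card : ℝ) ≤ ((n:ℝ)+1)/6 := by
    have h2 : B.supp.ncard = S.card := by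
      rw [hSdef]; exact Set.ncard_eq_toFinset_card' _
    rw [← h2]; exact hB
  have hyS : y ∈ S := (hSmem y).2 hyB
  have hdegS : ∀ x ∈ S, (2 * (n : ℝ) - 5) / 3 ≤ ((G.neighborFinset x).card : ℝ) :=
    fun x _ => hdeg x
  have hSnbr : ∀ x ∈ S, ∀ z, G.Adj x z → (colSub G c 0).Adj x z ∨ z ∈ S := by
    intro x hxS z hxz
    by_cases h0 : c s(x,z) = 0
    · exact Or.inl (show G.Adj x z ∧ c s(x,z) = 0 from ⟨hxz, h0⟩)
    · right
      have h1 : (colSub G c 1).Adj x z := by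
        show G.Adj x z ∧ c s(x,z) = 1
        refine ⟨hxz, ?_⟩
        have h0' : (c s(x,z)).val ≠ 0 := fun hv => h0 (Fin.ext hv)
        have h2 := (c s(x,z)).isLt
        refine Fin.ext ?_
        have h3 : ((1 : Fin 2)).val = 1 := rfl
        rw [h3]; omega
      rw [hSmem, SimpleGraph.ConnectedComponent.mem_supp_iff]
      have hx2 : (colSub G c 1).connectedComponentMk x = B :=
        (SimpleGraph.ConnectedComponent.mem_supp_iff _ _).1 ((hSmem x).1 hxS)
      rw [← hx2]
      exact SimpleGraph.ConnectedComponent.sound h1.symm.reachable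
  -- iteration
  set K : ℕ := ⌈2 * Real.log n⌉₊ with hKdef
  have hKge : 2 * Real.log n ≤ (K:ℝ) := Nat.le_ceil _
  have hKle : (K:ℝ) < 2 * Real.log n + 1 := Nat.ceil_lt_add_one (by positivity)
  have iter : ∀ k : ℕ, k ≤ K → ∃ U : Finset V,
      (y ∈ U ∧ ((colSub G c 0).induce (U : Set V)).Connected) ∧ U.card ≤ 2*k+1 ∧
      (2*(n:ℝ)/3 - 27*Real.log n ≤ ((nOut (colSub G c 0) U).card : ℝ) ∨
        2*(n:ℝ)/3 - ((wOut (colSub G c 0) U).card : ℝ) ≤ (n:ℝ)/6 * (1/2)^k) := by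
    intro k
    induction k with
    | zero =>
      intro _
      refine ⟨{y}, ⟨mem_singleton_self y, ?_⟩, by simp, Or.inr ?_⟩
      · rw [coe_singleton]; exact my_connected_singleton _ y
      · -- initial bound on the deficiency
        set R := colSub G c 0 with hR
        have hsub0 : G.neighborFinset y ⊆ S.erase y ∪ univ.filter (fun z => R.Adj y z) := by
          intro z hz
          rw [SimpleGraph.mem_neighborFinset] at hz
          rcases hSnbr y hyS z hz with hr | hb
          · exact mem_union_right _ (mem_filter.2 ⟨mem_univ z, hr⟩)
          · exact mem_union_left _ (mem_erase.2 ⟨hz.ne', hb⟩)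
        have hsub1 : {y} ∪ univ.filter (fun z => R.Adj y z) ⊆ wOut R {y} := by
          intro z hz
          rcases mem_union.1 hz with hz | hz
          · exact subset_wOut R {y} hz
          · exact mem_wOut_of_adj R (mem_singleton_self y) (mem_filter.1 hz).2
        have hdisj : Disjoint ({y} : Finset V) (univ.filter (fun z => R.Adj y z)) := by
          rw [Finset.disjoint_left]
          intro a ha h2
          rw [mem_singleton] at ha
          subst ha
          exact R.irrefl (mem_filter.1 h2).2
        have hc1 := card_le_card hsub1
        rw [card_union_of_disjoint hdisj, card_singleton] at hc1
        have hc0 := (card_le_card hsub0).trans (card_union_le _ _)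
        have herase : ((S.erase y).card : ℝ) = (S.card : ℝ) - 1 := by
          rw [card_erase_of_mem hyS, Nat.cast_sub (by exact card_pos.2 ⟨y, hyS⟩)]
          simp
        have hc0R : ((G.neighborFinset y).card : ℝ)
            ≤ ((S.erase y).card : ℝ) + ((univ.filter (fun z => R.Adj y z)).card : ℝ) := by
          exact_mod_cast hc0
        have hc1R : 1 + ((univ.filter (fun z => R.Adj y z)).card : ℝ)
            ≤ ((wOut R {y}).card : ℝ) := by exact_mod_cast hc1
        have hdy := hdegS y hyS
        rw [herase] at hc0R
        have hpow0 : ((n:ℝ)/6) * (1/2)^(0:ℕ) = (n:ℝ)/6 := by norm_num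
        rw [hpow0]
        linarith
    | succ k ih =>
      intro hk1
      obtain ⟨U, ⟨hyU, hconn⟩, hcardU, hdisj⟩ := ih (Nat.le_of_succ_le hk1)
      rcases hdisj with hgood | hd
      · exact ⟨U, ⟨hyU, hconn⟩, by omega, Or.inl hgood⟩
      by_cases hgood : 2*(n:ℝ)/3 - 27*Real.log n ≤ ((nOut (colSub G c 0) U).card : ℝ)
      · exact ⟨U, ⟨hyU, hconn⟩, by omega, Or.inl hgood⟩
      push_neg at hgood
      have hWNU : ((wOut (colSub G c 0) U).card : ℝ)
          = (U.card : ℝ) + ((nOut (colSub G c 0) U).card : ℝ) := by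
        exact_mod_cast card_wOut (colSub G c 0) U
      have hUb : (U.card : ℝ) ≤ 2*(k:ℝ)+1 := by exact_mod_cast hcardU
      have hkK : (k:ℝ) ≤ (K:ℝ) := by
        exact_mod_cast Nat.le_of_succ_le hk1
      have hd100 : (100:ℝ) ≤ 2*(n:ℝ)/3 - ((wOut (colSub G c 0) U).card : ℝ) := by
        linarith
      have hd6 : 2*(n:ℝ)/3 - ((wOut (colSub G c 0) U).card : ℝ) ≤ (n:ℝ)/6 := by
        have hple : ((1:ℝ)/2)^k ≤ 1 := by
          apply pow_le_one₀ <;> norm_num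
        have : (n:ℝ)/6 * (1/2)^k ≤ (n:ℝ)/6 * 1 := by
          apply mul_le_mul_of_nonneg_left hple
          positivity
        linarith
      obtain ⟨U', hsub, hyU', hconn', hcard', hgain⟩ :=
        key_step G (colSub G c 0) n hcard hnR S hScard hdegS hSnbr y hyS U hyU hconn
          hd100 hd6
      refine ⟨U', ⟨hyU', hconn'⟩, by omega, Or.inr ?_⟩
      have hps : ((1:ℝ)/2)^(k+1) = (1/2)^k * (1/2) := pow_succ _ _
      rw [hps]
      linarith
  -- conclusion
  obtain ⟨U, ⟨hyU, hconn⟩, hcardU, hdisj⟩ := iter K le_rfl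
  have hUb : (U.card : ℝ) ≤ 2*(K:ℝ)+1 := by exact_mod_cast hcardU
  have hNbound : 2*(n:ℝ)/3 - 27*Real.log n ≤ ((nOut (colSub G c 0) U).card : ℝ) := by
    rcases hdisj with hgood | hd
    · exact hgood
    · -- (n/6)·(1/2)^K ≤ 1
      have hlog2 : (0.6931471803:ℝ) < Real.log 2 := Real.log_two_gt_d9
      have hKlog : Real.log n ≤ (K:ℝ) * Real.log 2 := by
        nlinarith [mul_le_mul_of_nonneg_right hKge (by linarith : (0:ℝ) ≤ Real.log 2),
          mul_nonneg hL0.le (by linarith : (0:ℝ) ≤ 2*Real.log 2 - 1)]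
      have hn2K : (n:ℝ) ≤ 2^K := by
        have e1 : (n:ℝ) = Real.exp (Real.log n) := (Real.exp_log hn0).symm
        have e2 : Real.exp (Real.log n) ≤ Real.exp ((K:ℝ) * Real.log 2) :=
          Real.exp_le_exp.2 hKlog
        have e3 : Real.exp ((K:ℝ) * Real.log 2) = (2:ℝ)^K := by
          rw [Real.exp_nat_mul, Real.exp_log (by norm_num : (0:ℝ) < 2)]
        rw [e1, ← e3]
        exact e2
      have hfrac : (n:ℝ)/6 * (1/2)^K ≤ 1 := by
        have h1 : (n:ℝ)/6 * (1/2)^K ≤ (2:ℝ)^K * (1/2)^K := by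
          apply mul_le_mul_of_nonneg_right (by linarith) (by positivity)
        have h2 : (2:ℝ)^K * (1/2)^K = 1 := by
          rw [← mul_pow]; norm_num
        linarith
      have hWNU : ((wOut (colSub G c 0) U).card : ℝ)
          = (U.card : ℝ) + ((nOut (colSub G c 0) U).card : ℝ) := by
        exact_mod_cast card_wOut (colSub G c 0) U
      linarith
  refine ⟨(U : Set V), hconn, ?_, ?_⟩
  · rw [Set.ncard_coe_finset]
    linarith
  · have hsetN : {v : V | v ∉ (U : Set V) ∧ ∃ u ∈ (U : Set V), (colSub G c 0).Adj u v}
        = ((nOut (colSub G c 0) U : Finset V) : Set V) := by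
      ext v
      simp [nOut]
    rw [hsetN, Set.ncard_coe_finset]
    exact hNbound
end

section
/- For every integer r ≥ 1 and every n ≥ 2^r, there exists a graph G on n vertices, with each edge coloured with one of r colours, such that the minimum degree of G is at least n − 1 − ⌈n/2^r⌉, and the vertex set of G cannot be covered by monochromatic components of pairwise distinct colours; that is, there is no choice of one component C_i in colour i for (some of) the colours i ∈ {1, …, r}, with at most one component per colour, whose union is the whole vertex set of G. -/
open SimpleGraph

/-- A function preserved by adjacency is constant on reachability classes. -/
lemma reach_const' {V α : Type} {H : SimpleGraph V} {f : V → α}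
    (hf : ∀ u v, H.Adj u v → f u = f v) {u v : V} (h : H.Reachable u v) :
    f u = f v := by
  obtain ⟨w⟩ := h
  induction w with
  | nil => rfl
  | cons a _ ih => exact (hf _ _ a).trans ih

/-- The block vector of a vertex: the binary expansion of its residue mod `2^r`. -/
def bvec (r : ℕ) {n : ℕ} (v : Fin n) : Fin r → Fin 2 :=
  finFunctionFinEquiv.symm ⟨v.val % 2 ^ r, Nat.mod_lt _ (by positivity)⟩

/-- The graph: two vertices are adjacent iff their block vectors agree somewhere. -/
def myG (r n : ℕ) : SimpleGraph (Fin n) where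
  Adj u v := u ≠ v ∧ ∃ i : Fin r, bvec r u i = bvec r v i
  symm := ⟨by rintro u v ⟨h1, i, h2⟩; exact ⟨h1.symm, ⟨i, h2.symm⟩⟩⟩
  loopless := ⟨fun v h => h.1 rfl⟩

lemma myG_adj {r n : ℕ} (u v : Fin n) :
    (myG r n).Adj u v ↔ u ≠ v ∧ ∃ i : Fin r, bvec r u i = bvec r v i := Iff.rfl

/-- "The block vectors of the two endpoints agree at coordinate `i`", as a predicate
on unordered pairs. -/
def eqb (r : ℕ) {n : ℕ} (i : Fin r) : Sym2 (Fin n) → Prop :=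
  Sym2.lift ⟨fun u v => bvec r u i = bvec r v i, fun _ _ => propext ⟨Eq.symm, Eq.symm⟩⟩

open Classical in
/-- The colouring: an unordered pair gets a colour at which the block vectors
of its two endpoints agree, if such a colour exists. -/
noncomputable def mycol (r : ℕ) (hr : 1 ≤ r) {n : ℕ} : Sym2 (Fin n) → Fin r :=
  fun e => if h : ∃ i : Fin r, eqb r i e then h.choose else ⟨0, hr⟩

lemma mycol_key {r n : ℕ} (hr : 1 ≤ r) (u v : Fin n) (i : Fin r)
    (hj : ∃ j : Fin r, bvec r u j = bvec r v j) (hc : mycol r hr s(u, v) = i) :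
    bvec r u i = bvec r v i := by
  classical
  have h : ∃ j : Fin r, eqb r j s(u, v) := by
    obtain ⟨j, hjj⟩ := hj
    exact ⟨j, by simp only [eqb, Sym2.lift_mk]; exact hjj⟩
  have hc' : mycol r hr s(u, v) = h.choose := by
    unfold mycol
    rw [dif_pos h]
  have hs := h.choose_spec
  rw [hc'] at hc
  rw [hc] at hs
  simpa [eqb] using hs

/-- Counting vertices of `Fin n` in a fixed residue class mod `k`. -/
lemma resid_card {n k m : ℕ} (hk : 0 < k) (S : Set (Fin n))
    (hS : ∀ u ∈ S, u.val % k = m) : S.ncard ≤ (n - 1) / k + 1 := by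
  have h := Set.ncard_le_ncard_of_injOn
    (t := (Set.univ : Set (Fin ((n - 1) / k + 1))))
    (fun (u : Fin n) => (⟨u.val / k,
      Nat.lt_succ_of_le (Nat.div_le_div_right (Nat.le_pred_of_lt u.isLt))⟩ :
        Fin ((n - 1) / k + 1)))
    (fun a _ => Set.mem_univ _)
    (by
      intro u hu w hw h
      have h1 : u.val / k = w.val / k := by simpa [Fin.ext_iff] using h
      have h2 : u.val % k = w.val % k := by rw [hS u hu, hS w hw]
      refine Fin.ext ?_
      rw [← Nat.div_add_mod u.val k, ← Nat.div_add_mod w.val k, h1, h2])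
    Set.finite_univ
  simpa [Set.ncard_univ] using h

lemma fin2_of_ne : ∀ a c : Fin 2, a ≠ c → c = 1 - a := by decide

lemma fin2_ne_sub : ∀ a : Fin 2, a ≠ 1 - a := by decide

/-- For every `r ≥ 1` and `n ≥ 2^r`, there is an `r`-coloured graph on `n` vertices
    with minimum degree at least `n - 1 - ⌈n/2^r⌉` whose vertices cannot be covered
    by monochromatic components of pairwise distinct colours (at most one component
    per colour). -/
theorem lower_bound_construction_distinct_colours :
    ∀ r : ℕ, 1 ≤ r → ∀ n : ℕ, 2 ^ r ≤ n →
      ∃ (G : SimpleGraph (Fin n)) (c : Sym2 (Fin n) → Fin r),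
        (∀ v : Fin n, (n : ℝ) - 1 - (⌈(n : ℝ) / 2 ^ r⌉ : ℝ) ≤
          ((G.neighborSet v).ncard : ℝ)) ∧
        ¬ ∃ C : Fin r → Set (Fin n),
            (∀ i : Fin r, C i = ∅ ∨
              ∃ K : (colSub G c i).ConnectedComponent, C i = K.supp) ∧
            (⋃ i : Fin r, C i) = Set.univ := by
  classical
  intro r hr n hn
  have hk0 : 0 < 2 ^ r := by positivity
  have hn0 : 0 < n := lt_of_lt_of_le hk0 hn
  refine ⟨myG r n, mycol r hr, ?_, ?_⟩
  · -- degree bound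
    intro v
    set cv : Fin r → Fin 2 := fun i => 1 - bvec r v i with hcv
    set S : Set (Fin n) := {u | bvec r u = cv} with hSdef
    have hcompl : ((myG r n).neighborSet v)ᶜ = insert v S := by
      ext u
      simp only [Set.mem_compl_iff, mem_neighborSet, myG_adj, Set.mem_insert_iff,
        hSdef, Set.mem_setOf_eq, not_and, not_exists, ne_eq, not_not]
      constructor
      · intro h
        by_cases huv : u = v
        · exact Or.inl huv
        · refine Or.inr (funext fun i => ?_)
          have hne : ¬ (v = u) := fun e => huv e.symm
          exact fin2_of_ne _ _ (h hne i)
      · rintro (rfl | h) hne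
        · exact absurd rfl hne
        · intro i
          rw [h]
          exact fin2_ne_sub (bvec r v i)
    have hSm : ∀ u ∈ S, u.val % 2 ^ r = (finFunctionFinEquiv cv).val := by
      intro u hu
      have hu' : bvec r u = cv := hu
      unfold bvec at hu'
      have := (Equiv.symm_apply_eq _).mp hu'
      exact congrArg Fin.val this
    have hS' : S.ncard ≤ (n - 1) / 2 ^ r + 1 := resid_card hk0 S hSm
    have hcard : ((myG r n).neighborSet v).ncard + (insert v S).ncard = n := by
      rw [← hcompl]
      have := Set.ncard_add_ncard_compl ((myG r n).neighborSet v)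
      simpa [Nat.card_eq_fintype_card] using this
    set q : ℕ := (n - 1) / 2 ^ r with hqdef
    have hq : ((q + 1 : ℕ) : ℝ) ≤ (⌈(n : ℝ) / 2 ^ r⌉ : ℝ) := by
      have h2 : ((q + 1 : ℕ) : ℤ) ≤ ⌈(n : ℝ) / 2 ^ r⌉ := by
        rw [Int.le_ceil_iff]
        have hml : q * 2 ^ r ≤ n - 1 := Nat.div_mul_le_self _ _
        have hml' : q * 2 ^ r < n := lt_of_le_of_lt hml (by omega)
        have hpow : (0 : ℝ) < 2 ^ r := by positivity
        have hlt : (q : ℝ) < (n : ℝ) / 2 ^ r := by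
          rw [lt_div_iff₀ hpow]
          exact_mod_cast hml'
        push_cast
        linarith
      have h3 : ((q + 1 : ℕ) : ℝ) = (((q + 1 : ℕ) : ℤ) : ℝ) := by push_cast; ring
      rw [h3]
      exact_mod_cast h2
    have hins : (insert v S).ncard ≤ S.ncard + 1 := Set.ncard_insert_le _ _
    have hcardR : (((myG r n).neighborSet v).ncard : ℝ) + ((insert v S).ncard : ℝ)
        = n := by exact_mod_cast congrArg (Nat.cast : ℕ → ℝ) hcard
    have hinsR : ((insert v S).ncard : ℝ) ≤ (S.ncard : ℝ) + 1 := by exact_mod_cast hins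
    have hSR : (S.ncard : ℝ) ≤ ((q + 1 : ℕ) : ℝ) := by exact_mod_cast hS'
    linarith
  · -- no cover by components of distinct colours
    rintro ⟨C, hC, hU⟩
    have hconst : ∀ (i : Fin r) (K : (colSub (myG r n) (mycol r hr) i).ConnectedComponent),
        ∀ u ∈ K.supp, ∀ w ∈ K.supp, bvec r u i = bvec r w i := by
      intro i K u hu w hw
      rw [ConnectedComponent.mem_supp_iff] at hu hw
      have hreach : (colSub (myG r n) (mycol r hr) i).Reachable u w :=
        ConnectedComponent.exact (hu.trans hw.symm)
      exact reach_const' (H := colSub (myG r n) (mycol r hr) i)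
        (f := fun x => bvec r x i)
        (fun a b hab => mycol_key hr a b i hab.1.2 hab.2) hreach
    have hexu : ∃ u : Fin n, ∀ i : Fin r,
        bvec r u i = (if h : (C i).Nonempty then 1 - bvec r h.choose i else 0) := by
      set ε : Fin r → Fin 2 :=
        fun i => if h : (C i).Nonempty then 1 - bvec r h.choose i else 0 with hε
      refine ⟨⟨(finFunctionFinEquiv ε).val,
        lt_of_lt_of_le (finFunctionFinEquiv ε).isLt hn⟩, fun i => ?_⟩
      have hbu : bvec r (⟨(finFunctionFinEquiv ε).val,
          lt_of_lt_of_le (finFunctionFinEquiv ε).isLt hn⟩ : Fin n) = ε := by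
        unfold bvec
        have h1 : (⟨(⟨(finFunctionFinEquiv ε).val,
            lt_of_lt_of_le (finFunctionFinEquiv ε).isLt hn⟩ : Fin n).val % 2 ^ r,
            Nat.mod_lt _ (by positivity)⟩ : Fin (2 ^ r)) = finFunctionFinEquiv ε :=
          Fin.ext (Nat.mod_eq_of_lt (finFunctionFinEquiv ε).isLt)
        rw [h1, Equiv.symm_apply_apply]
      exact congrFun hbu i
    obtain ⟨u, hbu⟩ := hexu
    have humem : u ∈ ⋃ i, C i := by rw [hU]; trivial
    obtain ⟨i, hi⟩ : ∃ i, u ∈ C i := by simpa using humem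
    rcases hC i with h0 | ⟨K, hK⟩
    · rw [h0] at hi
      exact hi
    · have hne : (C i).Nonempty := ⟨u, hi⟩
      have hi' : u ∈ K.supp := by rw [← hK]; exact hi
      have hw' : hne.choose ∈ K.supp := by rw [← hK]; exact hne.choose_spec
      have heq := hconst i K u hi' hne.choose hw'
      have hthis := hbu i
      rw [dif_pos hne] at hthis
      rw [heq] at hthis
      exact fin2_ne_sub (bvec r hne.choose i) hthis
end

section
/- For every integer t ≥ 1 there exists n₀ such that for every n ≥ n₀ there is a graph G on n vertices, with each edge coloured red or blue, with minimum degree at least ⌈(2n−2t−1)/(t+1)⌉ − 1, whose vertex set cannot be covered by t monochromatic components; moreover G contains an independent set of t+1 vertices lying pairwise in distinct red components and pairwise in distinct blue components. -/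
open SimpleGraph

namespace LBC

open Finset

/-- A function constant on edges is constant on reachable pairs. -/
lemma reach_eq {V α : Type} {H : SimpleGraph V} (f : V → α)
    (h : ∀ a b : V, H.Adj a b → f a = f b) {x y : V} (hr : H.Reachable x y) :
    f x = f y := by
  obtain ⟨w⟩ := hr
  induction w with
  | nil => rfl
  | cons h' _ ih => exact (h _ _ h').trans ih

def TT (t : ℕ) : ℕ := (t + 1) * t / 2
def WW (t n : ℕ) : ℕ := n - (t + 1)
def qq (t n : ℕ) : ℕ := WW t n / TT t
def rho (t n : ℕ) : ℕ := WW t n % TT t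
def ss (t n : ℕ) : ℕ := rho t n / (t + 1)
def rr (t n : ℕ) : ℕ := rho t n % (t + 1)
def bad (t n : ℕ) : ℕ := if t + 1 ≤ 2 * rr t n then 1 else 0
def cpath (t : ℕ) : ℕ := (t + 2) / 2
def lo (t n : ℕ) : ℕ := rr t n - bad t n * cpath t

def w1 (i j : ℕ) : ℕ := if j = i + 2 then 1 else 0
def w2 (t i j : ℕ) : ℕ := if i = 0 ∧ j = t - 1 ∧ 2 ≤ t then 1 else 0
def w3 (t i j : ℕ) : ℕ := if i = 1 ∧ j = t ∧ 2 ≤ t then 1 else 0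
def u1 (t n i j : ℕ) : ℕ :=
  if bad t n = 1 ∧ ((i % 2 = 0 ∧ j = i + 1) ∨ (t % 2 = 0 ∧ i = t - 1 ∧ j = t)) then 1 else 0
def u2 (t n i j : ℕ) : ℕ := if i = 0 ∧ j = 1 then lo t n else 0
def szO (t n i j : ℕ) : ℕ :=
  qq t n + ss t n * (w1 i j + w2 t i j + w3 t i j) + u1 t n i j + u2 t n i j
/-- size of the cell with label `(i,j)` -/
def sz (t n i j : ℕ) : ℕ := if i = j then 1 else if i < j then szO t n i j else 0

lemma sz_diag (t n a : ℕ) : sz t n a a = 1 := by simp [sz]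

lemma sz_eq_zero (t n i j : ℕ) (h : j < i) : sz t n i j = 0 := by
  unfold sz
  rw [if_neg (by omega), if_neg (by omega)]

-- ### basic arithmetic facts

lemma fact_T2 (t : ℕ) : 2 * TT t = (t + 1) * t := by
  have h : 2 ∣ (t + 1) * t := by
    rcases Nat.even_or_odd t with h | h
    · exact Dvd.dvd.mul_left h.two_dvd _
    · have h2 : t % 2 = 1 := Nat.odd_iff.mp h
      exact Dvd.dvd.mul_right (by omega : (2:ℕ) ∣ t + 1) _
  unfold TT
  rw [mul_comm]
  exact Nat.div_mul_cancel h

lemma fact_Tpos (t : ℕ) (ht : 1 ≤ t) : 0 < TT t := by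
  have := fact_T2 t
  nlinarith

lemma fact_div (t n : ℕ) : TT t * qq t n + rho t n = WW t n := Nat.div_add_mod _ _

lemma fact_rho_lt (t n : ℕ) (ht : 1 ≤ t) : rho t n < TT t := Nat.mod_lt _ (fact_Tpos t ht)

lemma fact_s (t n : ℕ) : (t + 1) * ss t n + rr t n = rho t n := Nat.div_add_mod _ _

lemma fact_r_lt (t n : ℕ) : rr t n < t + 1 := Nat.mod_lt _ (by omega)

lemma fact_W (t n : ℕ) (hn : (t+1)^3 ≤ n) : WW t n + (t + 1) = n := by
  have h : t + 1 ≤ n := le_trans (Nat.le_self_pow (by norm_num) _) hn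
  unfold WW
  omega

lemma fact_q (t n : ℕ) (ht : 1 ≤ t) (hn : (t+1)^3 ≤ n) : t + 2 ≤ qq t n := by
  have hT := fact_T2 t
  have hTpos := fact_Tpos t ht
  rw [qq, Nat.le_div_iff_mul_le hTpos]
  -- (t+2) * TT t ≤ WW t n
  have hW := fact_W t n hn
  nlinarith [hn, hW, hT]

lemma fact_s2 (t n : ℕ) (ht : 1 ≤ t) : 2 * ss t n ≤ t := by
  have h1 := fact_s t n
  have h2 := fact_rho_lt t n ht
  have h3 := fact_T2 t
  nlinarith [h1, h2, h3]

lemma fact_ss_t1 (n : ℕ) : ss 1 n = 0 := by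
  have : TT 1 = 1 := by norm_num [TT]
  simp [ss, rho, this, Nat.mod_one]

lemma fact_bad01 (t n : ℕ) : bad t n = 0 ∨ bad t n = 1 := by
  unfold bad; split_ifs <;> simp

lemma fact_lo (t n : ℕ) : lo t n = rr t n - bad t n * cpath t := rfl

lemma fact_badr (t n : ℕ) (hb : bad t n = 1) : t + 1 ≤ 2 * rr t n := by
  by_contra h
  simp [bad, h] at hb

lemma fact_goodr (t n : ℕ) (hb : bad t n = 0) : 2 * rr t n ≤ t := by
  by_contra h
  simp [bad] at hb
  omega

-- ### counting evens

lemma count_even (k : ℕ) :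
    (∑ i ∈ range k, if i % 2 = 0 then (1:ℕ) else 0) = (k + 1) / 2 := by
  induction k with
  | zero => simp
  | succ k ih =>
    rw [Finset.sum_range_succ, ih]
    by_cases h : k % 2 = 0
    · rw [if_pos h]; omega
    · rw [if_neg h]; omega

-- ### pointwise decomposition of the size function

lemma sz_decomp (t n i j : ℕ) :
    sz t n i j
      = (if i = j then 1 else 0)
      + (if i < j then qq t n else 0)
      + (if i < j ∧ j = i + 2 then ss t n else 0)
      + (if i < j ∧ i = 0 ∧ j = t - 1 ∧ 2 ≤ t then ss t n else 0)
      + (if i < j ∧ i = 1 ∧ j = t ∧ 2 ≤ t then ss t n else 0)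
      + (if i < j ∧ bad t n = 1 ∧
            ((i % 2 = 0 ∧ j = i + 1) ∨ (t % 2 = 0 ∧ i = t - 1 ∧ j = t)) then 1 else 0)
      + (if i < j ∧ i = 0 ∧ j = 1 then lo t n else 0) := by
  unfold sz szO w1 w2 w3 u1 u2
  rcases lt_trichotomy i j with h | h | h
  · rw [if_neg (by omega), if_pos h]
    simp only [h, true_and, if_neg (show ¬ i = j by omega)]
    rw [Nat.mul_add, Nat.mul_add]
    simp only [mul_ite, mul_one, mul_zero, ite_true]
    ring
  · subst h
    simp [lt_irrefl]
  · have h1 : ¬ i = j := by omega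
    have h2 : ¬ i < j := by omega
    simp [h1, h2]

-- ### generic sum evaluator

lemma sum_ite_single (m K c : ℕ) :
    (∑ b ∈ range m, if b = K then c else 0) = if K < m then c else 0 := by
  rw [Finset.sum_ite_eq' (range m) K (fun _ => c)]
  simp [Finset.mem_range]

-- ### row sums

lemma row_eval (t n i : ℕ) (ht : 1 ≤ t) (hi : i < t + 1) :
    ∑ b ∈ range (t+1), sz t n i b
      = 1 + (t - i) * qq t n
      + (if i + 2 ≤ t then ss t n else 0)
      + (if i = 0 ∧ 2 ≤ t then ss t n else 0)
      + (if i = 1 ∧ 2 ≤ t then ss t n else 0)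
      + (if bad t n = 1 ∧ i % 2 = 0 ∧ i + 1 ≤ t then 1 else 0)
      + (if bad t n = 1 ∧ t % 2 = 0 ∧ i = t - 1 then 1 else 0)
      + (if i = 0 then lo t n else 0) := by
  have hsum : ∀ b ∈ range (t+1), sz t n i b =
      (if b = i then 1 else 0)
      + (if i < b then qq t n else 0)
      + (if b = i + 2 then ss t n else 0)
      + (if b = t - 1 then (if i = 0 ∧ 2 ≤ t then ss t n else 0) else 0)
      + (if b = t then (if i = 1 ∧ 2 ≤ t then ss t n else 0) else 0)
      + (if b = i + 1 then (if bad t n = 1 ∧ i % 2 = 0 ∧ i + 1 ≤ t then 1 else 0) else 0)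
      + (if b = t then (if bad t n = 1 ∧ t % 2 = 0 ∧ i = t - 1 then 1 else 0) else 0)
      + (if b = 1 then (if i = 0 then lo t n else 0) else 0) := by
    intro b hb
    rw [Finset.mem_range] at hb
    rw [sz_decomp]
    have e1 : (if i = b then (1:ℕ) else 0) = (if b = i then 1 else 0) := by
      split_ifs <;> omega
    have e3 : (if i < b ∧ b = i + 2 then ss t n else 0)
        = (if b = i + 2 then ss t n else 0) := by
      split_ifs <;> omega
    have e4 : (if i < b ∧ i = 0 ∧ b = t - 1 ∧ 2 ≤ t then ss t n else 0)
        = (if b = t - 1 then (if i = 0 ∧ 2 ≤ t then ss t n else 0) else 0) := by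
      split_ifs <;> omega
    have e5 : (if i < b ∧ i = 1 ∧ b = t ∧ 2 ≤ t then ss t n else 0)
        = (if b = t then (if i = 1 ∧ 2 ≤ t then ss t n else 0) else 0) := by
      split_ifs <;> omega
    have e6 : (if i < b ∧ bad t n = 1 ∧
          ((i % 2 = 0 ∧ b = i + 1) ∨ (t % 2 = 0 ∧ i = t - 1 ∧ b = t)) then (1:ℕ) else 0)
        = (if b = i + 1 then (if bad t n = 1 ∧ i % 2 = 0 ∧ i + 1 ≤ t then 1 else 0) else 0)
          + (if b = t then (if bad t n = 1 ∧ t % 2 = 0 ∧ i = t - 1 then 1 else 0) else 0) := by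
      split_ifs <;> omega
    have e7 : (if i < b ∧ i = 0 ∧ b = 1 then lo t n else 0)
        = (if b = 1 then (if i = 0 then lo t n else 0) else 0) := by
      split_ifs <;> omega
    rw [e1, e3, e4, e5, e6, e7]
    ring
  rw [Finset.sum_congr rfl hsum]
  simp only [Finset.sum_add_distrib]
  have hA1 : (∑ b ∈ range (t+1), if b = i then (1:ℕ) else 0) = 1 := by
    rw [sum_ite_single]; rw [if_pos hi]
  have hA2 : (∑ b ∈ range (t+1), if i < b then qq t n else 0) = (t - i) * qq t n := by
    rw [← Finset.sum_filter]
    have : (range (t+1)).filter (fun b => i < b) = Ico (i+1) (t+1) := by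
      ext x; simp only [Finset.mem_filter, Finset.mem_range, Finset.mem_Ico]; omega
    rw [this, Finset.sum_const, Nat.card_Ico, smul_eq_mul]
    congr 1
    omega
  have hA3 : (∑ b ∈ range (t+1), if b = i + 2 then ss t n else 0)
      = (if i + 2 ≤ t then ss t n else 0) := by
    rw [sum_ite_single]
    split_ifs <;> omega
  have hA4 : (∑ b ∈ range (t+1), if b = t - 1 then
      (if i = 0 ∧ 2 ≤ t then ss t n else 0) else 0)
      = (if i = 0 ∧ 2 ≤ t then ss t n else 0) := by
    rw [sum_ite_single]; rw [if_pos (by omega)]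
  have hA5 : (∑ b ∈ range (t+1), if b = t then
      (if i = 1 ∧ 2 ≤ t then ss t n else 0) else 0)
      = (if i = 1 ∧ 2 ≤ t then ss t n else 0) := by
    rw [sum_ite_single]; rw [if_pos (by omega)]
  have hA6 : (∑ b ∈ range (t+1), if b = i + 1 then
      (if bad t n = 1 ∧ i % 2 = 0 ∧ i + 1 ≤ t then (1:ℕ) else 0) else 0)
      = (if bad t n = 1 ∧ i % 2 = 0 ∧ i + 1 ≤ t then 1 else 0) := by
    rw [sum_ite_single]
    split_ifs <;> omega
  have hA7 : (∑ b ∈ range (t+1), if b = t then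
      (if bad t n = 1 ∧ t % 2 = 0 ∧ i = t - 1 then (1:ℕ) else 0) else 0)
      = (if bad t n = 1 ∧ t % 2 = 0 ∧ i = t - 1 then 1 else 0) := by
    rw [sum_ite_single]; rw [if_pos (by omega)]
  have hA8 : (∑ b ∈ range (t+1), if b = 1 then
      (if i = 0 then lo t n else 0) else 0)
      = (if i = 0 then lo t n else 0) := by
    rw [sum_ite_single]; rw [if_pos (by omega)]
  rw [hA1, hA2, hA3, hA4, hA5, hA6, hA7, hA8]

-- ### column sums

lemma col_eval (t n i j : ℕ) (ht : 1 ≤ t) (hj : j < t + 1) :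
    ∑ a ∈ range (t+1), (if a = i then 0 else sz t n a j)
      = (if j = i then 0 else 1)
      + ((range j).erase i).card * qq t n
      + (if 2 ≤ j ∧ ¬ j - 2 = i then ss t n else 0)
      + (if j = t - 1 ∧ 2 ≤ t ∧ ¬ 0 = i then ss t n else 0)
      + (if j = t ∧ 2 ≤ t ∧ ¬ 1 = i then ss t n else 0)
      + (if bad t n = 1 ∧ 1 ≤ j ∧ (j-1) % 2 = 0 ∧ ¬ j - 1 = i then 1 else 0)
      + (if bad t n = 1 ∧ t % 2 = 0 ∧ j = t ∧ ¬ t - 1 = i then 1 else 0)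
      + (if j = 1 ∧ ¬ 0 = i then lo t n else 0) := by
  have hsum : ∀ a ∈ range (t+1), (if a = i then 0 else sz t n a j) =
      (if a = j then (if j = i then 0 else 1) else 0)
      + (if a < j ∧ ¬ a = i then qq t n else 0)
      + (if a = j - 2 then (if 2 ≤ j ∧ ¬ j - 2 = i then ss t n else 0) else 0)
      + (if a = 0 then (if j = t - 1 ∧ 2 ≤ t ∧ ¬ 0 = i then ss t n else 0) else 0)
      + (if a = 1 then (if j = t ∧ 2 ≤ t ∧ ¬ 1 = i then ss t n else 0) else 0)
      + (if a = j - 1 then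
          (if bad t n = 1 ∧ 1 ≤ j ∧ (j-1) % 2 = 0 ∧ ¬ j - 1 = i then 1 else 0) else 0)
      + (if a = t - 1 then
          (if bad t n = 1 ∧ t % 2 = 0 ∧ j = t ∧ ¬ t - 1 = i then 1 else 0) else 0)
      + (if a = 0 then (if j = 1 ∧ ¬ 0 = i then lo t n else 0) else 0) := by
    intro a ha
    rw [Finset.mem_range] at ha
    by_cases hai : a = i
    · rw [if_pos hai]
      have p1 : (if a = j then (if j = i then (0:ℕ) else 1) else 0) = 0 := by
        by_cases h1 : a = j
        · rw [if_pos h1, if_pos (by omega)]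
        · rw [if_neg h1]
      have p2 : (if a < j ∧ ¬ a = i then qq t n else 0) = 0 := by
        rw [if_neg (by omega)]
      have p3 : (if a = j - 2 then (if 2 ≤ j ∧ ¬ j - 2 = i then ss t n else 0) else 0) = 0 := by
        by_cases h1 : a = j - 2
        · rw [if_pos h1, if_neg (by omega)]
        · rw [if_neg h1]
      have p4 : (if a = 0 then (if j = t - 1 ∧ 2 ≤ t ∧ ¬ 0 = i then ss t n else 0) else 0) = 0 := by
        by_cases h1 : a = 0
        · rw [if_pos h1, if_neg (by omega)]
        · rw [if_neg h1]
      have p5 : (if a = 1 then (if j = t ∧ 2 ≤ t ∧ ¬ 1 = i then ss t n else 0) else 0) = 0 := by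
        by_cases h1 : a = 1
        · rw [if_pos h1, if_neg (by omega)]
        · rw [if_neg h1]
      have p6 : (if a = j - 1 then
          (if bad t n = 1 ∧ 1 ≤ j ∧ (j-1) % 2 = 0 ∧ ¬ j - 1 = i then (1:ℕ) else 0) else 0) = 0 := by
        by_cases h1 : a = j - 1
        · rw [if_pos h1, if_neg (by omega)]
        · rw [if_neg h1]
      have p7 : (if a = t - 1 then
          (if bad t n = 1 ∧ t % 2 = 0 ∧ j = t ∧ ¬ t - 1 = i then (1:ℕ) else 0) else 0) = 0 := by
        by_cases h1 : a = t - 1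
        · rw [if_pos h1, if_neg (by omega)]
        · rw [if_neg h1]
      have p8 : (if a = 0 then (if j = 1 ∧ ¬ 0 = i then lo t n else 0) else 0) = 0 := by
        by_cases h1 : a = 0
        · rw [if_pos h1, if_neg (by omega)]
        · rw [if_neg h1]
      rw [p1, p2, p3, p4, p5, p6, p7, p8]
    · rw [if_neg hai, sz_decomp]
      have e1 : (if a = j then (1:ℕ) else 0)
          = (if a = j then (if j = i then 0 else 1) else 0) := by
        split_ifs <;> omega
      have e2 : (if a < j then qq t n else 0)
          = (if a < j ∧ ¬ a = i then qq t n else 0) := by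
        split_ifs <;> omega
      have e3 : (if a < j ∧ j = a + 2 then ss t n else 0)
          = (if a = j - 2 then (if 2 ≤ j ∧ ¬ j - 2 = i then ss t n else 0) else 0) := by
        split_ifs <;> omega
      have e4 : (if a < j ∧ a = 0 ∧ j = t - 1 ∧ 2 ≤ t then ss t n else 0)
          = (if a = 0 then (if j = t - 1 ∧ 2 ≤ t ∧ ¬ 0 = i then ss t n else 0) else 0) := by
        split_ifs <;> omega
      have e5 : (if a < j ∧ a = 1 ∧ j = t ∧ 2 ≤ t then ss t n else 0)
          = (if a = 1 then (if j = t ∧ 2 ≤ t ∧ ¬ 1 = i then ss t n else 0) else 0) := by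
        split_ifs <;> omega
      have e6 : (if a < j ∧ bad t n = 1 ∧
            ((a % 2 = 0 ∧ j = a + 1) ∨ (t % 2 = 0 ∧ a = t - 1 ∧ j = t)) then (1:ℕ) else 0)
          = (if a = j - 1 then
              (if bad t n = 1 ∧ 1 ≤ j ∧ (j-1) % 2 = 0 ∧ ¬ j - 1 = i then 1 else 0) else 0)
            + (if a = t - 1 then
              (if bad t n = 1 ∧ t % 2 = 0 ∧ j = t ∧ ¬ t - 1 = i then 1 else 0) else 0) := by
        split_ifs <;> omega
      have e7 : (if a < j ∧ a = 0 ∧ j = 1 then lo t n else 0)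
          = (if a = 0 then (if j = 1 ∧ ¬ 0 = i then lo t n else 0) else 0) := by
        split_ifs <;> omega
      rw [e1, e2, e3, e4, e5, e6, e7]
      ring
  rw [Finset.sum_congr rfl hsum]
  simp only [Finset.sum_add_distrib]
  have hB1 : (∑ a ∈ range (t+1), if a = j then (if j = i then (0:ℕ) else 1) else 0)
      = (if j = i then 0 else 1) := by
    rw [sum_ite_single]; rw [if_pos hj]
  have hB2 : (∑ a ∈ range (t+1), if a < j ∧ ¬ a = i then qq t n else 0)
      = ((range j).erase i).card * qq t n := by
    rw [← Finset.sum_filter]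
    have : (range (t+1)).filter (fun a => a < j ∧ ¬ a = i) = (range j).erase i := by
      ext x
      simp only [Finset.mem_filter, Finset.mem_range, Finset.mem_erase]
      constructor
      · rintro ⟨-, h1, h2⟩; exact ⟨h2, h1⟩
      · rintro ⟨h2, h1⟩; exact ⟨by omega, h1, h2⟩
    rw [this, Finset.sum_const, smul_eq_mul]
  have hB3 : (∑ a ∈ range (t+1), if a = j - 2 then
      (if 2 ≤ j ∧ ¬ j - 2 = i then ss t n else 0) else 0)
      = (if 2 ≤ j ∧ ¬ j - 2 = i then ss t n else 0) := by
    rw [sum_ite_single]; rw [if_pos (by omega)]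
  have hB4 : (∑ a ∈ range (t+1), if a = 0 then
      (if j = t - 1 ∧ 2 ≤ t ∧ ¬ 0 = i then ss t n else 0) else 0)
      = (if j = t - 1 ∧ 2 ≤ t ∧ ¬ 0 = i then ss t n else 0) := by
    rw [sum_ite_single]; rw [if_pos (by omega)]
  have hB5 : (∑ a ∈ range (t+1), if a = 1 then
      (if j = t ∧ 2 ≤ t ∧ ¬ 1 = i then ss t n else 0) else 0)
      = (if j = t ∧ 2 ≤ t ∧ ¬ 1 = i then ss t n else 0) := by
    rw [sum_ite_single]; rw [if_pos (by omega)]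
  have hB6 : (∑ a ∈ range (t+1), if a = j - 1 then
      (if bad t n = 1 ∧ 1 ≤ j ∧ (j-1) % 2 = 0 ∧ ¬ j - 1 = i then (1:ℕ) else 0) else 0)
      = (if bad t n = 1 ∧ 1 ≤ j ∧ (j-1) % 2 = 0 ∧ ¬ j - 1 = i then 1 else 0) := by
    rw [sum_ite_single]; rw [if_pos (by omega)]
  have hB7 : (∑ a ∈ range (t+1), if a = t - 1 then
      (if bad t n = 1 ∧ t % 2 = 0 ∧ j = t ∧ ¬ t - 1 = i then (1:ℕ) else 0) else 0)
      = (if bad t n = 1 ∧ t % 2 = 0 ∧ j = t ∧ ¬ t - 1 = i then 1 else 0) := by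
    rw [sum_ite_single]; rw [if_pos (by omega)]
  have hB8 : (∑ a ∈ range (t+1), if a = 0 then
      (if j = 1 ∧ ¬ 0 = i then lo t n else 0) else 0)
      = (if j = 1 ∧ ¬ 0 = i then lo t n else 0) := by
    rw [sum_ite_single]; rw [if_pos (by omega)]
  rw [hB1, hB2, hB3, hB4, hB5, hB6, hB7, hB8]

/-- The total size is `n`. -/
lemma sum_sz (t n : ℕ) (ht : 1 ≤ t) (hn : (t+1)^3 ≤ n) :
    ∑ i ∈ range (t+1), ∑ j ∈ range (t+1), sz t n i j = n := by
  have hrw : ∀ i ∈ range (t+1), ∑ j ∈ range (t+1), sz t n i j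
      = 1 + (t - i) * qq t n
      + (if i + 2 ≤ t then ss t n else 0)
      + (if i = 0 ∧ 2 ≤ t then ss t n else 0)
      + (if i = 1 ∧ 2 ≤ t then ss t n else 0)
      + (if bad t n = 1 ∧ i % 2 = 0 ∧ i + 1 ≤ t then 1 else 0)
      + (if bad t n = 1 ∧ t % 2 = 0 ∧ i = t - 1 then 1 else 0)
      + (if i = 0 then lo t n else 0) := by
    intro i hi
    exact row_eval t n i ht (Finset.mem_range.mp hi)
  rw [Finset.sum_congr rfl hrw]
  simp only [Finset.sum_add_distrib]
  have hC1 : (∑ _i ∈ range (t+1), (1:ℕ)) = t + 1 := by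
    rw [Finset.sum_const, smul_eq_mul, Finset.card_range, mul_one]
  have hC2 : (∑ i ∈ range (t+1), (t - i) * qq t n) = TT t * qq t n := by
    rw [← Finset.sum_mul]
    congr 1
    have h1 : (∑ i ∈ range (t+1), (t - i)) = ∑ i ∈ range (t+1), i := by
      have := Finset.sum_range_reflect (fun k => k) (t+1)
      simpa using this
    rw [h1]
    have h2 := Finset.sum_range_id_mul_two (t+1)
    have h4 : (t+1) * (t+1-1) = (t+1) * t := by congr 1
    rw [h4] at h2
    have h3 := fact_T2 t
    omega
  have hC3 : (∑ i ∈ range (t+1), if i + 2 ≤ t then ss t n else 0)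
      = (t - 1) * ss t n := by
    rw [← Finset.sum_filter]
    have : (range (t+1)).filter (fun i => i + 2 ≤ t) = range (t-1) := by
      ext x; simp only [Finset.mem_filter, Finset.mem_range]; omega
    rw [this, Finset.sum_const, Finset.card_range, smul_eq_mul]
  have hC4 : (∑ i ∈ range (t+1), if i = 0 ∧ 2 ≤ t then ss t n else 0)
      = (if 2 ≤ t then ss t n else 0) := by
    have hpt : ∀ i ∈ range (t+1), (if i = 0 ∧ 2 ≤ t then ss t n else 0)
        = (if i = 0 then (if 2 ≤ t then ss t n else 0) else 0) := by
      intro i _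
      split_ifs <;> omega
    rw [Finset.sum_congr rfl hpt, sum_ite_single, if_pos (by omega)]
  have hC5 : (∑ i ∈ range (t+1), if i = 1 ∧ 2 ≤ t then ss t n else 0)
      = (if 2 ≤ t then ss t n else 0) := by
    have hpt : ∀ i ∈ range (t+1), (if i = 1 ∧ 2 ≤ t then ss t n else 0)
        = (if i = 1 then (if 2 ≤ t then ss t n else 0) else 0) := by
      intro i _
      split_ifs <;> omega
    rw [Finset.sum_congr rfl hpt, sum_ite_single, if_pos (by omega)]
  have hC6 : (∑ i ∈ range (t+1), if bad t n = 1 ∧ i % 2 = 0 ∧ i + 1 ≤ t then (1:ℕ) else 0)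
      = (if bad t n = 1 then (t+1)/2 else 0) := by
    by_cases hb : bad t n = 1
    · rw [if_pos hb]
      have hpt : ∀ i ∈ range (t+1), (if bad t n = 1 ∧ i % 2 = 0 ∧ i + 1 ≤ t then (1:ℕ) else 0)
          = (if i + 1 ≤ t then (if i % 2 = 0 then 1 else 0) else 0) := by
        intro i _
        split_ifs <;> omega
      rw [Finset.sum_congr rfl hpt]
      rw [Finset.sum_range_succ, if_neg (by omega)]
      have hpt2 : ∀ i ∈ range t, (if i + 1 ≤ t then (if i % 2 = 0 then (1:ℕ) else 0) else 0)
          = (if i % 2 = 0 then 1 else 0) := by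
        intro i hi
        rw [Finset.mem_range] at hi
        rw [if_pos (by omega)]
      rw [Finset.sum_congr rfl hpt2, count_even, add_zero]
    · rw [if_neg hb]
      apply Finset.sum_eq_zero
      intro i _
      rw [if_neg (by tauto)]
  have hC7 : (∑ i ∈ range (t+1), if bad t n = 1 ∧ t % 2 = 0 ∧ i = t - 1 then (1:ℕ) else 0)
      = (if bad t n = 1 ∧ t % 2 = 0 then 1 else 0) := by
    have hpt : ∀ i ∈ range (t+1), (if bad t n = 1 ∧ t % 2 = 0 ∧ i = t - 1 then (1:ℕ) else 0)
        = (if i = t - 1 then (if bad t n = 1 ∧ t % 2 = 0 then 1 else 0) else 0) := by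
      intro i _
      split_ifs <;> omega
    rw [Finset.sum_congr rfl hpt, sum_ite_single, if_pos (by omega)]
  have hC8 : (∑ i ∈ range (t+1), if i = 0 then lo t n else 0) = lo t n := by
    rw [sum_ite_single, if_pos (by omega)]
  rw [hC1, hC2, hC3, hC4, hC5, hC6, hC7, hC8]
  -- now pure arithmetic
  have hdiv := fact_div t n
  have hs := fact_s t n
  have hrlt := fact_r_lt t n
  have hW := fact_W t n hn
  have hT2 := fact_T2 t
  have hbad01 := fact_bad01 t n
  have hlo : lo t n = rr t n - bad t n * cpath t := rfl
  have hcp : cpath t = (t+2)/2 := rfl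
  -- s-part
  have hspart : (t - 1) * ss t n + ((if 2 ≤ t then ss t n else 0) + (if 2 ≤ t then ss t n else 0))
      = (t+1) * ss t n := by
    by_cases h2 : 2 ≤ t
    · rw [if_pos h2]
      have he : (t - 1) * ss t n + (ss t n + ss t n) = (t - 1 + 2) * ss t n := by ring
      rw [he]
      congr 1
      omega
    · have ht1 : t = 1 := by omega
      subst ht1
      rw [fact_ss_t1 n]
      simp
  -- bad/u-part
  have hup : (if bad t n = 1 then (t+1)/2 else 0)
      + (if bad t n = 1 ∧ t % 2 = 0 then (1:ℕ) else 0) + lo t n = rr t n := by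
    rcases hbad01 with hb | hb
    · rw [hb]
      rw [if_neg (by omega : ¬ (0:ℕ) = 1),
        if_neg (by omega : ¬ ((0:ℕ) = 1 ∧ t % 2 = 0))]
      rw [hlo, hb]
      omega
    · rw [hb]
      rw [if_pos rfl]
      have hble := fact_badr t n hb
      have hcple : cpath t ≤ rr t n := by rw [hcp]; omega
      rw [hlo, hb, hcp] at *
      by_cases ht2 : t % 2 = 0
      · rw [if_pos (⟨rfl, ht2⟩ : (1:ℕ) = 1 ∧ t % 2 = 0)]
        omega
      · rw [if_neg (by omega : ¬ ((1:ℕ) = 1 ∧ t % 2 = 0))]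
        omega
  omega

/-- Auxiliary: the expansion of `2*n`. -/
lemma two_n (t n : ℕ) (ht : 1 ≤ t) (hn : (t+1)^3 ≤ n) :
    2 * n = (t+1) * (t * qq t n) + 2 * ((t+1) * ss t n) + 2 * rr t n + 2 * (t+1) := by
  have hdiv := fact_div t n
  have hs := fact_s t n
  have hW := fact_W t n hn
  have hT2 := fact_T2 t
  have e2 : 2 * (TT t * qq t n) = (t+1) * (t * qq t n) := by
    calc 2 * (TT t * qq t n) = (2 * TT t) * qq t n := by ring
      _ = ((t+1) * t) * qq t n := by rw [hT2]
      _ = (t+1) * (t * qq t n) := by ring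
  omega

/-- The key degree inequality. -/
lemma key (t n : ℕ) (ht : 1 ≤ t) (hn : (t+1)^3 ≤ n) (i j : ℕ) (hij : i ≤ j) (hj : j < t+1) :
    2*n ≤ (t+1) * ((∑ b ∈ range (t+1), sz t n i b) +
      (∑ a ∈ range (t+1), if a = i then 0 else sz t n a j)) + 2*t + 1 := by
  have hi : i < t + 1 := lt_of_le_of_lt hij hj
  have h2n := two_n t n ht hn
  have hrlt := fact_r_lt t n
  have hbad01 := fact_bad01 t n
  have hq := fact_q t n ht hn
  have hs2 := fact_s2 t n ht
  rw [row_eval t n i ht hi, col_eval t n i j ht hj]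
  by_cases hd : i = j
  · -- diagonal case
    subst hd
    rw [if_pos rfl]
    rw [Finset.erase_eq_of_notMem (by simp), Finset.card_range]
    -- lower bound for the bracket
    have hqq : (t - i) * qq t n + i * qq t n = t * qq t n := by
      rw [← Nat.add_mul]
      congr 1
      omega
    have hsb : 2 * ss t n ≤
        (if i + 2 ≤ t then ss t n else 0)
        + (if i = 0 ∧ 2 ≤ t then ss t n else 0)
        + (if i = 1 ∧ 2 ≤ t then ss t n else 0)
        + (if 2 ≤ i ∧ ¬ i - 2 = i then ss t n else 0)
        + (if i = t - 1 ∧ 2 ≤ t ∧ ¬ 0 = i then ss t n else 0)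
        + (if i = t ∧ 2 ≤ t ∧ ¬ 1 = i then ss t n else 0) := by
      by_cases h2 : 2 ≤ t
      · split_ifs <;> omega
      · have ht1 : t = 1 := by omega
        have hs0 : ss t n = 0 := by rw [ht1]; exact fact_ss_t1 n
        rw [hs0]
        simp
    have hub : bad t n ≤
        (if bad t n = 1 ∧ i % 2 = 0 ∧ i + 1 ≤ t then 1 else 0)
        + (if bad t n = 1 ∧ t % 2 = 0 ∧ i = t - 1 then 1 else 0)
        + (if bad t n = 1 ∧ 1 ≤ i ∧ (i-1) % 2 = 0 ∧ ¬ i - 1 = i then 1 else 0)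
        + (if bad t n = 1 ∧ t % 2 = 0 ∧ i = t ∧ ¬ t - 1 = i then 1 else 0) := by
      rcases hbad01 with hb | hb
      · rw [hb]
        exact Nat.zero_le _
      · rw [hb]
        split_ifs <;> omega
    have hbig : 1 + t * qq t n + 2 * ss t n + bad t n ≤
        (1 + (t - i) * qq t n
          + (if i + 2 ≤ t then ss t n else 0)
          + (if i = 0 ∧ 2 ≤ t then ss t n else 0)
          + (if i = 1 ∧ 2 ≤ t then ss t n else 0)
          + (if bad t n = 1 ∧ i % 2 = 0 ∧ i + 1 ≤ t then 1 else 0)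
          + (if bad t n = 1 ∧ t % 2 = 0 ∧ i = t - 1 then 1 else 0)
          + (if i = 0 then lo t n else 0))
        + (0 + i * qq t n
          + (if 2 ≤ i ∧ ¬ i - 2 = i then ss t n else 0)
          + (if i = t - 1 ∧ 2 ≤ t ∧ ¬ 0 = i then ss t n else 0)
          + (if i = t ∧ 2 ≤ t ∧ ¬ 1 = i then ss t n else 0)
          + (if bad t n = 1 ∧ 1 ≤ i ∧ (i-1) % 2 = 0 ∧ ¬ i - 1 = i then 1 else 0)
          + (if bad t n = 1 ∧ t % 2 = 0 ∧ i = t ∧ ¬ t - 1 = i then 1 else 0)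
          + (if i = 1 ∧ ¬ 0 = i then lo t n else 0)) := by
      omega
    have hmul := Nat.mul_le_mul_left (t+1) hbig
    have hexp : (t+1) * (1 + t * qq t n + 2 * ss t n + bad t n)
        = (t+1) * (t * qq t n) + 2 * ((t+1) * ss t n) + (t+1) + (t+1) * bad t n := by
      ring
    have hfin : 2*n ≤ (t+1) * (1 + t * qq t n + 2 * ss t n + bad t n) + 2*t + 1 := by
      rw [hexp, h2n]
      rcases hbad01 with hb | hb
      · have := fact_goodr t n hb
        rw [hb]
        generalize (t+1) * (t * qq t n) = X
        generalize (t+1) * ss t n = Y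
        omega
      · rw [hb]
        generalize (t+1) * (t * qq t n) = X
        generalize (t+1) * ss t n = Y
        omega
    exact le_trans hfin (Nat.add_le_add_right (Nat.add_le_add_right hmul (2*t)) 1)
  · by_cases hd2 : j = i + 1
    · -- superdiagonal case
      subst hd2
      rw [if_neg (show ¬ (i + 1 = i) by omega)]
      have hmem : i ∈ range (i+1) := by simp
      rw [Finset.card_erase_of_mem hmem, Finset.card_range]
      have hilt : i < t := by omega
      have hqq : (t - i) * qq t n + (i + 1 - 1) * qq t n = t * qq t n := by
        rw [← Nat.add_mul]
        congr 1
        omega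
      have hsb : 2 * ss t n ≤
          (if i + 2 ≤ t then ss t n else 0)
          + (if i = 0 ∧ 2 ≤ t then ss t n else 0)
          + (if i = 1 ∧ 2 ≤ t then ss t n else 0)
          + (if 2 ≤ i + 1 ∧ ¬ i + 1 - 2 = i then ss t n else 0)
          + (if i + 1 = t - 1 ∧ 2 ≤ t ∧ ¬ 0 = i then ss t n else 0)
          + (if i + 1 = t ∧ 2 ≤ t ∧ ¬ 1 = i then ss t n else 0) := by
        by_cases h2 : 2 ≤ t
        · split_ifs <;> omega
        · have ht1 : t = 1 := by omega
          have hs0 : ss t n = 0 := by rw [ht1]; exact fact_ss_t1 n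
          rw [hs0]
          simp
      have hbig : 2 + t * qq t n + 2 * ss t n ≤
          (1 + (t - i) * qq t n
            + (if i + 2 ≤ t then ss t n else 0)
            + (if i = 0 ∧ 2 ≤ t then ss t n else 0)
            + (if i = 1 ∧ 2 ≤ t then ss t n else 0)
            + (if bad t n = 1 ∧ i % 2 = 0 ∧ i + 1 ≤ t then 1 else 0)
            + (if bad t n = 1 ∧ t % 2 = 0 ∧ i = t - 1 then 1 else 0)
            + (if i = 0 then lo t n else 0))
          + (1 + (i + 1 - 1) * qq t n
            + (if 2 ≤ i + 1 ∧ ¬ i + 1 - 2 = i then ss t n else 0)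
            + (if i + 1 = t - 1 ∧ 2 ≤ t ∧ ¬ 0 = i then ss t n else 0)
            + (if i + 1 = t ∧ 2 ≤ t ∧ ¬ 1 = i then ss t n else 0)
            + (if bad t n = 1 ∧ 1 ≤ i + 1 ∧ (i + 1 - 1) % 2 = 0 ∧ ¬ i + 1 - 1 = i then 1 else 0)
            + (if bad t n = 1 ∧ t % 2 = 0 ∧ i + 1 = t ∧ ¬ t - 1 = i then 1 else 0)
            + (if i + 1 = 1 ∧ ¬ 0 = i then lo t n else 0)) := by
        omega
      have hmul := Nat.mul_le_mul_left (t+1) hbig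
      have hexp : (t+1) * (2 + t * qq t n + 2 * ss t n)
          = (t+1) * (t * qq t n) + 2 * ((t+1) * ss t n) + 2 * (t+1) := by
        ring
      have hfin : 2*n ≤ (t+1) * (2 + t * qq t n + 2 * ss t n) + 2*t + 1 := by
        rw [hexp, h2n]
        generalize (t+1) * (t * qq t n) = X
        generalize (t+1) * ss t n = Y
        omega
      exact le_trans hfin (Nat.add_le_add_right (Nat.add_le_add_right hmul (2*t)) 1)
    · -- far case : i + 2 ≤ j
      have hfar : i + 2 ≤ j := by omega
      rw [if_neg (show ¬ (j = i) by omega)]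
      have hmem : i ∈ range j := by simp; omega
      rw [Finset.card_erase_of_mem hmem, Finset.card_range]
      have hqq : ((t+1)) * qq t n ≤ (t - i) * qq t n + (j - 1) * qq t n := by
        rw [← Nat.add_mul]
        exact Nat.mul_le_mul_right _ (by omega)
      have hbig : 2 + (t+1) * qq t n ≤
          (1 + (t - i) * qq t n
            + (if i + 2 ≤ t then ss t n else 0)
            + (if i = 0 ∧ 2 ≤ t then ss t n else 0)
            + (if i = 1 ∧ 2 ≤ t then ss t n else 0)
            + (if bad t n = 1 ∧ i % 2 = 0 ∧ i + 1 ≤ t then 1 else 0)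
            + (if bad t n = 1 ∧ t % 2 = 0 ∧ i = t - 1 then 1 else 0)
            + (if i = 0 then lo t n else 0))
          + (1 + (j - 1) * qq t n
            + (if 2 ≤ j ∧ ¬ j - 2 = i then ss t n else 0)
            + (if j = t - 1 ∧ 2 ≤ t ∧ ¬ 0 = i then ss t n else 0)
            + (if j = t ∧ 2 ≤ t ∧ ¬ 1 = i then ss t n else 0)
            + (if bad t n = 1 ∧ 1 ≤ j ∧ (j-1) % 2 = 0 ∧ ¬ j - 1 = i then 1 else 0)
            + (if bad t n = 1 ∧ t % 2 = 0 ∧ j = t ∧ ¬ t - 1 = i then 1 else 0)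
            + (if j = 1 ∧ ¬ 0 = i then lo t n else 0)) := by
        omega
      have hmul := Nat.mul_le_mul_left (t+1) hbig
      have hexp : (t+1) * (2 + (t+1) * qq t n)
          = (t+1) * ((t+1) * qq t n) + 2 * (t+1) := by
        ring
      have hsplit : (t+1) * ((t+1) * qq t n)
          = (t+1) * (t * qq t n) + (t+1) * qq t n := by
        ring
      have hQs : 2 * ((t+1) * ss t n) + 2 * (t+1) ≤ (t+1) * qq t n := by
        have h1 : 2 * ss t n + 2 ≤ qq t n := by omega
        have h2 := Nat.mul_le_mul_left (t+1) h1
        calc 2 * ((t+1) * ss t n) + 2 * (t+1) = (t+1) * (2 * ss t n + 2) := by ring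
          _ ≤ (t+1) * qq t n := h2
      have hfin : 2*n ≤ (t+1) * (2 + (t+1) * qq t n) + 2*t + 1 := by
        rw [hexp, hsplit, h2n]
        have hQs2 := hQs
        generalize hgX : (t+1) * (t * qq t n) = X
        generalize hgY : (t+1) * ss t n = Y at hQs2 ⊢
        generalize hgZ : (t+1) * qq t n = Z at hQs2 ⊢
        omega
      exact le_trans hfin (Nat.add_le_add_right (Nat.add_le_add_right hmul (2*t)) 1)

/-- existence of a labelling with prescribed fibre sizes -/
lemma exists_phi (t n : ℕ) (ht : 1 ≤ t) (hn : (t+1)^3 ≤ n) :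
    ∃ φ : Fin n → Fin (t+1) × Fin (t+1),
      ∀ p : Fin (t+1) × Fin (t+1),
        (Finset.univ.filter fun v => φ v = p).card = sz t n p.1.val p.2.val := by
  classical
  have hcard : Fintype.card ((p : Fin (t+1) × Fin (t+1)) × Fin (sz t n p.1.val p.2.val))
      = Fintype.card (Fin n) := by
    rw [Fintype.card_sigma, Fintype.card_fin]
    simp only [Fintype.card_fin]
    rw [Fintype.sum_prod_type]
    have : ∀ i : Fin (t+1), ∑ j : Fin (t+1), sz t n i.val j.val
        = ∑ j ∈ range (t+1), sz t n i.val j := by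
      intro i; exact Fin.sum_univ_eq_sum_range _ _
    calc ∑ i : Fin (t+1), ∑ j : Fin (t+1), sz t n i.val j.val
        = ∑ i : Fin (t+1), ∑ j ∈ range (t+1), sz t n i.val j := by
          exact Finset.sum_congr rfl fun i _ => this i
      _ = ∑ i ∈ range (t+1), ∑ j ∈ range (t+1), sz t n i j :=
          Fin.sum_univ_eq_sum_range (fun i => ∑ j ∈ range (t+1), sz t n i j) (t+1)
      _ = n := sum_sz t n ht hn
  obtain ⟨e⟩ := Fintype.card_eq.mp hcard.symm
  refine ⟨fun v => (e v).1, fun p => ?_⟩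
  have : (Finset.univ.filter fun v : Fin n => (e v).1 = p).card
      = Fintype.card {v : Fin n // (e v).1 = p} := (Fintype.card_subtype _).symm
  rw [this]
  have e2 : {v : Fin n // (e v).1 = p} ≃
      {y : (p : Fin (t+1) × Fin (t+1)) × Fin (sz t n p.1.val p.2.val) // y.1 = p} :=
    e.subtypeEquiv (fun v => Iff.rfl)
  have e3 : {y : (p : Fin (t+1) × Fin (t+1)) × Fin (sz t n p.1.val p.2.val) // y.1 = p}
      ≃ Fin (sz t n p.1.val p.2.val) := by
    refine ⟨fun y => y.2 ▸ y.1.2, fun x => ⟨⟨p, x⟩, rfl⟩, ?_, ?_⟩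
    · rintro ⟨⟨a, x⟩, rfl⟩; rfl
    · intro x; rfl
  rw [Fintype.card_congr (e2.trans e3), Fintype.card_fin]

end LBC

/-- For every `t ≥ 1` and `n` sufficiently large, there is a 2-coloured graph on
    `n` vertices with minimum degree at least `⌈(2n-2t-1)/(t+1)⌉ - 1` whose vertices
    cannot be covered by `t` monochromatic components; moreover it has an independent
    set of `t+1` vertices lying pairwise in distinct red components and pairwise in
    distinct blue components. -/
theorem lower_bound_construction_cover :
    ∀ t : ℕ, 1 ≤ t → ∃ n₀ : ℕ, ∀ n : ℕ, n₀ ≤ n →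
      ∃ (G : SimpleGraph (Fin n)) (c : Sym2 (Fin n) → Fin 2),
        (∀ v : Fin n, (⌈(2 * (n : ℝ) - 2 * t - 1) / (t + 1)⌉ : ℝ) - 1 ≤
          ((G.neighborSet v).ncard : ℝ)) ∧
        (¬ ∃ S : Finset (Set (Fin n)), S.card ≤ t ∧ (∀ C ∈ S, IsMonoComp G c C) ∧
          ∀ v : Fin n, ∃ C ∈ S, v ∈ C) ∧
        ∃ f : Fin (t + 1) → Fin n, Function.Injective f ∧
          (∀ i j : Fin (t + 1), ¬ G.Adj (f i) (f j)) ∧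
          (∀ i j : Fin (t + 1), i ≠ j →
            (colSub G c 0).connectedComponentMk (f i) ≠
              (colSub G c 0).connectedComponentMk (f j)) ∧
          (∀ i j : Fin (t + 1), i ≠ j →
            (colSub G c 1).connectedComponentMk (f i) ≠
              (colSub G c 1).connectedComponentMk (f j)) := by
  intro t ht
  refine ⟨(t+1)^3, fun n hn => ?_⟩
  classical
  obtain ⟨φ, hφ⟩ := LBC.exists_phi t n ht hn
  set G : SimpleGraph (Fin n) :=
    { Adj := fun u v => u ≠ v ∧ ((φ u).1 = (φ v).1 ∨ (φ u).2 = (φ v).2)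
      symm := by
        constructor
        rintro u v ⟨h1, h2⟩
        exact ⟨h1.symm, by tauto⟩
      loopless := ⟨fun v h => h.1 rfl⟩ } with hG
  set c : Sym2 (Fin n) → Fin 2 :=
    Sym2.lift ⟨fun u v => if (φ u).1 = (φ v).1 then 0 else 1, by
      intro u v
      simp only [eq_comm]
      ⟩ with hc
  have hGadj : ∀ u v : Fin n, G.Adj u v ↔
      (u ≠ v ∧ ((φ u).1 = (φ v).1 ∨ (φ u).2 = (φ v).2)) := fun u v => Iff.rfl
  have hcval : ∀ u v : Fin n, c s(u, v) = if (φ u).1 = (φ v).1 then 0 else 1 :=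
    fun u v => rfl
  -- invariants
  have hred : ∀ u v : Fin n, (colSub G c 0).Adj u v → (φ u).1 = (φ v).1 := by
    intro u v hadj
    obtain ⟨-, h0⟩ := hadj
    rw [hcval] at h0
    by_contra hne
    rw [if_neg hne] at h0
    exact absurd h0 (by decide)
  have hblue : ∀ u v : Fin n, (colSub G c 1).Adj u v → (φ u).2 = (φ v).2 := by
    intro u v hadj
    obtain ⟨⟨hne, hor⟩, h1⟩ := hadj
    rw [hcval] at h1
    by_cases hrow : (φ u).1 = (φ v).1
    · rw [if_pos hrow] at h1
      exact absurd h1 (by decide)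
    · exact hor.resolve_left hrow
  -- the special vertices
  have hfib : ∀ k : Fin (t+1),
      (Finset.univ.filter fun v => φ v = (k, k)).Nonempty := by
    intro k
    rw [← Finset.card_pos, hφ]
    rw [LBC.sz_diag]
    norm_num
  set f : Fin (t+1) → Fin n := fun k => (hfib k).choose with hfdef
  have hf : ∀ k : Fin (t+1), φ (f k) = (k, k) := by
    intro k
    have := (hfib k).choose_spec
    simpa using this
  have hinj : Function.Injective f := by
    intro a b hab
    have : φ (f a) = φ (f b) := by rw [hab]
    rw [hf, hf] at this
    exact (Prod.mk.injEq _ _ _ _).mp this |>.1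
  have hnadj : ∀ i j : Fin (t+1), ¬ G.Adj (f i) (f j) := by
    intro i j hadj
    rw [hGadj] at hadj
    obtain ⟨hne, hor⟩ := hadj
    rcases hor with h | h
    · rw [hf, hf] at h
      simp only [Prod.fst] at h
      exact hne (congrArg f h)
    · rw [hf, hf] at h
      simp only [Prod.snd] at h
      exact hne (congrArg f h)
  have hredMk : ∀ i j : Fin (t+1), i ≠ j →
      (colSub G c 0).connectedComponentMk (f i) ≠
        (colSub G c 0).connectedComponentMk (f j) := by
    intro i j hij h
    have hr : (colSub G c 0).Reachable (f i) (f j) := ConnectedComponent.exact h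
    have h2 : (φ (f i)).1 = (φ (f j)).1 := LBC.reach_eq (fun v => (φ v).1) hred hr
    rw [hf, hf] at h2
    exact hij h2
  have hblueMk : ∀ i j : Fin (t+1), i ≠ j →
      (colSub G c 1).connectedComponentMk (f i) ≠
        (colSub G c 1).connectedComponentMk (f j) := by
    intro i j hij h
    have hr : (colSub G c 1).Reachable (f i) (f j) := ConnectedComponent.exact h
    have h2 : (φ (f i)).2 = (φ (f j)).2 := LBC.reach_eq (fun v => (φ v).2) hblue hr
    rw [hf, hf] at h2
    exact hij h2
  refine ⟨G, c, ?_, ?_, f, hinj, hnadj, hredMk, hblueMk⟩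
  · -- degree bound
    intro v
    -- the degree as a finset card
    set F : Finset (Fin n) := Finset.univ.filter (fun u => G.Adj v u) with hF
    have hns : G.neighborSet v = (F : Set (Fin n)) := by
      ext u
      simp [hF, SimpleGraph.mem_neighborSet]
    have hncard : (G.neighborSet v).ncard = F.card := by
      rw [hns, Set.ncard_coe_finset]
    set p := φ v with hp
    -- fibre of v is nonempty, so (p.1 : ℕ) ≤ p.2
    have hple : (p.1 : ℕ) ≤ (p.2 : ℕ) := by
      by_contra hlt
      push_neg at hlt
      have h0 : (Finset.univ.filter fun u => φ u = p).card = 0 := by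
        rw [hφ, LBC.sz_eq_zero _ _ _ _ hlt]
      have : v ∈ Finset.univ.filter fun u => φ u = p := by simp [hp]
      rw [Finset.card_eq_zero] at h0
      simp [h0] at this
    -- split the neighbourhood
    set A : Finset (Fin n) := Finset.univ.filter (fun u => (φ u).1 = p.1) with hA
    set B : Finset (Fin n) :=
      Finset.univ.filter (fun u => (φ u).2 = p.2 ∧ (φ u).1 ≠ p.1) with hB
    have hsplit : F = (A ∪ B).erase v := by
      ext u
      simp only [hF, hA, hB, Finset.mem_erase, Finset.mem_union, Finset.mem_filter,
        Finset.mem_univ, true_and, hGadj]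
      constructor
      · rintro ⟨hne, hor⟩
        refine ⟨hne.symm, ?_⟩
        by_cases hrow : (φ u).1 = p.1
        · exact Or.inl hrow
        · refine Or.inr ⟨?_, hrow⟩
          rcases hor with h | h
          · exact absurd h.symm hrow
          · exact h.symm
      · rintro ⟨hne, hor⟩
        refine ⟨hne.symm, ?_⟩
        rcases hor with h | h
        · exact Or.inl h.symm
        · exact Or.inr h.1.symm
    have hvA : v ∈ A ∪ B := by
      apply Finset.mem_union_left
      simp [hA, hp]
    have hdisj : Disjoint A B := by
      rw [Finset.disjoint_left]
      intro u huA huB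
      simp [hA] at huA
      simp [hB] at huB
      exact huB.2 huA
    have hcardA : A.card = ∑ b ∈ Finset.range (t+1), LBC.sz t n p.1.val b := by
      have hmap : ∀ x ∈ A, φ x ∈ Finset.univ.filter
          (fun p' : Fin (t+1) × Fin (t+1) => p'.1 = p.1) := by
        intro x hx
        simp only [hA, Finset.mem_filter, Finset.mem_univ, true_and] at hx ⊢
        exact hx
      rw [Finset.card_eq_sum_card_fiberwise hmap]
      have step : ∀ p' ∈ Finset.univ.filter
          (fun p' : Fin (t+1) × Fin (t+1) => p'.1 = p.1),
          (A.filter fun x => φ x = p').card = LBC.sz t n p'.1.val p'.2.val := by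
        intro p' hp'
        simp only [Finset.mem_filter, Finset.mem_univ, true_and] at hp'
        rw [← hφ p']
        congr 1
        ext x
        simp only [hA, Finset.mem_filter, Finset.mem_univ, true_and]
        constructor
        · rintro ⟨-, h⟩; exact h
        · intro h; exact ⟨by rw [h, hp'], h⟩
      rw [Finset.sum_congr rfl step]
      rw [Finset.sum_filter]
      rw [Fintype.sum_prod_type]
      rw [Finset.sum_eq_single p.1]
      · have hstep : ∀ b : Fin (t+1),
            (if (p.1 : Fin (t+1)) = p.1 then LBC.sz t n p.1.val b.val else 0)
              = LBC.sz t n p.1.val b.val := fun b => if_pos rfl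
        rw [Finset.sum_congr rfl (fun b _ => hstep b)]
        exact Fin.sum_univ_eq_sum_range (fun b => LBC.sz t n p.1.val b) (t+1)
      · intro a _ ha
        rw [Finset.sum_eq_zero]
        intro b _
        rw [if_neg ha]
      · intro h
        exact absurd (Finset.mem_univ p.1) h
    have hcardB : B.card = ∑ a ∈ Finset.range (t+1),
        if a = p.1.val then 0 else LBC.sz t n a p.2.val := by
      have hmap : ∀ x ∈ B, φ x ∈ Finset.univ.filter
          (fun p' : Fin (t+1) × Fin (t+1) => p'.2 = p.2 ∧ p'.1 ≠ p.1) := by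
        intro x hx
        simp only [hB, Finset.mem_filter, Finset.mem_univ, true_and] at hx ⊢
        exact hx
      rw [Finset.card_eq_sum_card_fiberwise hmap]
      have step : ∀ p' ∈ Finset.univ.filter
          (fun p' : Fin (t+1) × Fin (t+1) => p'.2 = p.2 ∧ p'.1 ≠ p.1),
          (B.filter fun x => φ x = p').card = LBC.sz t n p'.1.val p'.2.val := by
        intro p' hp'
        simp only [Finset.mem_filter, Finset.mem_univ, true_and] at hp'
        rw [← hφ p']
        congr 1
        ext x
        simp only [hB, Finset.mem_filter, Finset.mem_univ, true_and]
        constructor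
        · rintro ⟨-, h⟩; exact h
        · intro h; exact ⟨by rw [h]; exact hp', h⟩
      rw [Finset.sum_congr rfl step]
      rw [Finset.sum_filter]
      rw [Fintype.sum_prod_type]
      have swap : ∀ a : Fin (t+1),
          (∑ b : Fin (t+1), if (b = p.2 ∧ a ≠ p.1) then LBC.sz t n a.val b.val else 0)
          = if a.val = p.1.val then 0 else LBC.sz t n a.val p.2.val := by
        intro a
        by_cases ha : a = p.1
        · rw [if_pos (by rw [ha])]
          apply Finset.sum_eq_zero
          intro b _
          rw [if_neg (by tauto)]
        · have ha' : ¬ (a.val = p.1.val) := fun h => ha (Fin.ext h)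
          rw [if_neg ha']
          rw [Finset.sum_eq_single p.2]
          · rw [if_pos ⟨rfl, ha⟩]
          · intro b _ hb
            rw [if_neg (by tauto)]
          · intro h; exact absurd (Finset.mem_univ p.2) h
      rw [Finset.sum_congr rfl (fun a _ => swap a)]
      exact Fin.sum_univ_eq_sum_range
        (fun a => if a = p.1.val then 0 else LBC.sz t n a p.2.val) (t+1)
    have hApos : 1 ≤ A.card := by
      apply Finset.card_pos.mpr
      exact ⟨v, by simp [hA, hp]⟩
    have hFcard : F.card + 1 = A.card + B.card := by
      rw [hsplit, Finset.card_erase_of_mem hvA, Finset.card_union_of_disjoint hdisj]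
      have : 1 ≤ A.card + B.card := le_trans hApos (Nat.le_add_right _ _)
      omega
    -- apply the key inequality
    have hkey := LBC.key t n ht hn p.1.val p.2.val hple p.2.isLt
    rw [← hcardA, ← hcardB] at hkey
    -- now conclude over ℝ
    rw [hncard]
    have hd : 2*n ≤ (t+1) * (F.card + 1) + 2*t + 1 := by
      rw [hFcard]; exact hkey
    have hceil : (⌈(2 * (n : ℝ) - 2 * t - 1) / (t + 1)⌉ : ℤ) ≤ (F.card : ℤ) + 1 := by
      rw [Int.ceil_le]
      push_cast
      rw [div_le_iff₀ (by positivity)]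
      have : (2*n : ℝ) ≤ ((t:ℝ)+1) * ((F.card : ℝ) + 1) + 2*t + 1 := by
        exact_mod_cast hd
      nlinarith
    have : (⌈(2 * (n : ℝ) - 2 * t - 1) / (t + 1)⌉ : ℝ) ≤ (F.card : ℝ) + 1 := by
      exact_mod_cast hceil
    linarith
  · -- no cover by t monochromatic components
    rintro ⟨S, hScard, hSmono, hScov⟩
    have hchoice : ∀ k : Fin (t+1), ∃ C ∈ S, f k ∈ C := fun k => hScov (f k)
    choose C hCS hCmem using hchoice
    have hlt : S.card < (Finset.univ : Finset (Fin (t+1))).card := by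
      rw [Finset.card_univ, Fintype.card_fin]
      omega
    obtain ⟨k, -, l, -, hkl, hCeq⟩ :=
      Finset.exists_ne_map_eq_of_card_lt_of_maps_to hlt (fun k _ => hCS k)
    obtain ⟨i0, K, hK⟩ := hSmono (C k) (hCS k)
    have hk : f k ∈ K.supp := by rw [← hK]; exact hCmem k
    have hl : f l ∈ K.supp := by
      have := hCmem l
      rw [← hCeq, hK] at this
      exact this
    rw [SimpleGraph.ConnectedComponent.mem_supp_iff] at hk hl
    have heq : (colSub G c i0).connectedComponentMk (f k)
        = (colSub G c i0).connectedComponentMk (f l) := by rw [hk, hl]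
    fin_cases i0
    · exact hredMk k l hkl heq
    · exact hblueMk k l hkl heq
end

section
/- Let G be a graph on n vertices, with each edge coloured red, blue or yellow, such that the minimum degree of G is at least 7n/8, and let R be a red component and B a blue component of G with |R ∩ B| ≥ n/4. Then either R ∪ B is the whole vertex set of G, or there is a yellow component Y of G with |R ∩ B ∩ Y| ≥ n/8. -/
open SimpleGraph

/-- In a 3-coloured graph with minimum degree at least `7n/8`, if `R` is a red
    component and `B` a blue component with `|R ∩ B| ≥ n/4`, then either `R ∪ B` is
    the whole vertex set, or some yellow component `Y` satisfies `|R ∩ B ∩ Y| ≥ n/8`. -/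
theorem two_intersection_dichotomy {V : Type} [Fintype V]
    (G : SimpleGraph V) [DecidableRel G.Adj] (c : Sym2 V → Fin 3)
    (n : ℕ) (hn : Fintype.card V = n)
    (hdeg : ∀ v : V, 7 * (n : ℝ) / 8 ≤ G.degree v)
    (R : (colSub G c 0).ConnectedComponent) (B : (colSub G c 1).ConnectedComponent)
    (hint : (n : ℝ) / 4 ≤ ((R.supp ∩ B.supp).ncard : ℝ)) :
    R.supp ∪ B.supp = Set.univ ∨
      ∃ Y : (colSub G c 2).ConnectedComponent,
        (n : ℝ) / 8 ≤ ((R.supp ∩ B.supp ∩ Y.supp).ncard : ℝ) := by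
  by_cases hfull : R.supp ∪ B.supp = Set.univ
  · exact Or.inl hfull
  right
  -- pick a vertex v outside R ∪ B
  obtain ⟨v, hv⟩ : ∃ v : V, v ∉ R.supp ∪ B.supp := by
    by_contra h
    push_neg at h
    exact hfull (Set.eq_univ_of_forall h)
  have hvR : v ∉ R.supp := fun h => hv (Or.inl h)
  have hvB : v ∉ B.supp := fun h => hv (Or.inr h)
  set S : Set V := R.supp ∩ B.supp with hS
  set N : Set V := G.neighborSet v with hN
  refine ⟨(colSub G c 2).connectedComponentMk v, ?_⟩
  -- every neighbour of v inside S is joined to v by a yellow edge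
  have hsub : S ∩ N ⊆ S ∩ ((colSub G c 2).connectedComponentMk v).supp := by
    rintro u ⟨huS, huN⟩
    refine ⟨huS, ?_⟩
    have hadj : G.Adj v u := huN
    have hc0 : c s(v, u) ≠ 0 := by
      intro h0
      apply hvR
      have : (colSub G c 0).Adj v u := ⟨hadj, h0⟩
      have := ConnectedComponent.connectedComponentMk_eq_of_adj this
      simp only [ConnectedComponent.mem_supp_iff] at huS ⊢
      rw [this, huS.1]
    have hc1 : c s(v, u) ≠ 1 := by
      intro h1
      apply hvB
      have : (colSub G c 1).Adj v u := ⟨hadj, h1⟩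
      have := ConnectedComponent.connectedComponentMk_eq_of_adj this
      simp only [ConnectedComponent.mem_supp_iff] at huS ⊢
      rw [this, huS.2]
    have hc2 : c s(v, u) = 2 := by omega
    have : (colSub G c 2).Adj v u := ⟨hadj, hc2⟩
    have heq := ConnectedComponent.connectedComponentMk_eq_of_adj this
    simp only [ConnectedComponent.mem_supp_iff]
    exact heq.symm
  -- counting
  have hfinS : S.Finite := Set.toFinite _
  have hNcard : (N.ncard : ℝ) = G.degree v := by
    rw [hN, Set.ncard_eq_toFinset_card', ← G.card_neighborFinset_eq_degree]
    congr 1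
  have hSN : S.ncard = (S ∩ N).ncard + (S \ N).ncard := by
    exact (Set.ncard_inter_add_ncard_diff_eq_ncard S N (Set.toFinite _)).symm
  have hdiff_sub : S \ N ⊆ Set.univ \ N := by
    intro x hx; exact ⟨trivial, hx.2⟩
  have hcompl : ((Set.univ \ N : Set V).ncard : ℝ) = n - G.degree v := by
    have h1 : (Set.univ \ N : Set V).ncard = (Set.univ : Set V).ncard - N.ncard :=
      Set.ncard_diff (Set.subset_univ _) (Set.toFinite _)
    have h2 : N.ncard ≤ (Set.univ : Set V).ncard :=
      Set.ncard_le_ncard (Set.subset_univ _) (Set.toFinite _)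
    rw [h1, Nat.cast_sub h2, hNcard, Set.ncard_univ, Nat.card_eq_fintype_card, hn]
  have hdiff_le : ((S \ N).ncard : ℝ) ≤ (n : ℝ) - G.degree v := by
    rw [← hcompl]
    exact_mod_cast Set.ncard_le_ncard hdiff_sub (Set.toFinite _)
  have hdegv := hdeg v
  have hkey : (n : ℝ) / 8 ≤ ((S ∩ N).ncard : ℝ) := by
    have : (S.ncard : ℝ) = ((S ∩ N).ncard : ℝ) + ((S \ N).ncard : ℝ) := by
      exact_mod_cast hSN
    linarith
  calc (n : ℝ) / 8 ≤ ((S ∩ N).ncard : ℝ) := hkey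
    _ ≤ _ := by
        exact_mod_cast Nat.cast_le.mpr (Set.ncard_le_ncard hsub (Set.toFinite _))
end
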